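/- arXiv:2604.13825 — 7 statements merged into one kernel-verified Lean document; each statement's English description precedes it below -/
import Mathlib

section
/- Let f : 𝔻 → 𝔻 be analytic, not identically 0, and let σ be a finite positive Borel measure on ∂𝔻 such that log|f(z)|^{-2} = Σ_{w∈𝔻, f(w)=0} m_w · log|(z−w)/(1−w̄z)|^{-2} + 2∫_{∂𝔻}(1−|z|²)/|ξ−z|² dσ(ξ) for every z ∈ 𝔻 with f(z) ≠ 0 (m_w the order of the zero of f at w). Set μ = Σ_{w : f(w)=0} m_w(1−|w|²)δ_w + 2σ on the closed disc 𝔻̄ and P[μ](z) = ∫_{𝔻̄} (1−|z|²)/|1−w̄z|² dμ(w). Then log|f(z)|^{-2} ≥ P[μ](z) for every z ∈ 𝔻 with f(z) ≠ 0. -/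
open MeasureTheory Complex Set Metric Filter
open scoped ENNReal NNReal Topology

noncomputable section

/-- The hyperbolic derivative of an analytic self-map of the unit disc. -/
def hypDeriv (f : ℂ → ℂ) (z : ℂ) : ℝ :=
  (1 - ‖z‖ ^ 2) * ‖deriv f z‖ / (1 - ‖f z‖ ^ 2)

/-- A self-map of the disc is contractive if its hyperbolic derivative is
uniformly bounded by a constant smaller than one. -/
def ContractiveMap (f : ℂ → ℂ) : Prop :=
  ∃ D < (1 : ℝ), ∀ z ∈ ball (0 : ℂ) 1, hypDeriv f z ≤ D

/-- The closed arc of the unit circle with center `ξ` and normalized length `t`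
(arclength `2 π t`). -/
def bdryArc (ξ : ℂ) (t : ℝ) : Set ℂ :=
  {η : ℂ | ∃ θ : ℝ, |θ| ≤ Real.pi * t ∧ η = Complex.exp (θ * Complex.I) * ξ}

/-- The Carleson box over the arc with center `ξ` and normalized length `t`. -/
def carlesonBox (ξ : ℂ) (t : ℝ) : Set ℂ :=
  {z : ℂ | z ∈ ball (0 : ℂ) 1 ∧ 1 - ‖z‖ ≤ t ∧ z ≠ 0 ∧ (‖z‖ : ℂ)⁻¹ * z ∈ bdryArc ξ t}

/-- Normalized arclength measure on the unit circle (total mass 1). -/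
def circleM : Measure ℂ :=
  Measure.map (fun θ : ℝ => Complex.exp (2 * Real.pi * θ * Complex.I))
    (volume.restrict (Ioc (0 : ℝ) 1))

/-- Normalized area measure on the unit disc (total mass 1). -/
def discM : Measure ℂ :=
  (ENNReal.ofReal Real.pi)⁻¹ • volume.restrict (ball (0 : ℂ) 1)

/-- Poisson integral of a measure on the unit circle. -/
def poissonInt (σ : Measure ℂ) (z : ℂ) : ℝ :=
  ∫ ξ, (1 - ‖z‖ ^ 2) / ‖ξ - z‖ ^ 2 ∂σ

/-- Hyperbolic distance on the unit disc. -/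
def hypDist (z w : ℂ) : ℝ :=
  (1 / 2) * Real.log ((1 + ‖(z - w) / (1 - (starRingEnd ℂ) w * z)‖) /
    (1 - ‖(z - w) / (1 - (starRingEnd ℂ) w * z)‖))

/-- `u` is harmonic on the unit disc: twice continuously differentiable with
vanishing Laplacian. -/
def HarmonicOnDisc (u : ℂ → ℝ) : Prop :=
  ContDiffOn ℝ 2 u (ball (0 : ℂ) 1) ∧
    ∀ z ∈ ball (0 : ℂ) 1,
      fderiv ℝ (fun w => fderiv ℝ u w 1) z 1 +
        fderiv ℝ (fun w => fderiv ℝ u w Complex.I) z Complex.I = 0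

/-- An inner function: a bounded analytic self-map of the disc whose radial limits
have modulus one almost everywhere on the circle. -/
def InnerFunction (f : ℂ → ℂ) : Prop :=
  DifferentiableOn ℂ f (ball (0 : ℂ) 1) ∧
    (∀ z ∈ ball (0 : ℂ) 1, f z ∈ ball (0 : ℂ) 1) ∧
    ∀ᵐ ξ ∂circleM, ∃ L : ℂ, ‖L‖ = 1 ∧
      Tendsto (fun r : ℝ => f ((r : ℂ) * ξ)) (nhdsWithin 1 (Iio 1)) (nhds L)

/-- The set of boundary points whose radial limit under `f` exists and lies in `E`. -/
def radialPreimage (f : ℂ → ℂ) (E : Set ℂ) : Set ℂ :=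
  {ξ : ℂ | ‖ξ‖ = 1 ∧ ∃ L ∈ E,
    Tendsto (fun r : ℝ => f ((r : ℂ) * ξ)) (nhdsWithin 1 (Iio 1)) (nhds L)}

/-- Harmonic measure of `E ⊆ ∂𝔻` from the point `z ∈ 𝔻`. -/
def harmonicMeas (z : ℂ) (E : Set ℂ) : ℝ :=
  ∫ ξ in E, (1 - ‖z‖ ^ 2) / ‖ξ - z‖ ^ 2 ∂circleM

/-- Poisson integral of a positive measure on the closed unit disc. -/
def poissonMu (μ : Measure ℂ) (z : ℂ) : ℝ≥0∞ :=
  ∫⁻ w, ENNReal.ofReal ((1 - ‖z‖ ^ 2) / ‖1 - (starRingEnd ℂ) w * z‖ ^ 2) ∂μ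

/-- The measure `Σ_{f(w)=0} m_w (1-|w|²) δ_w` over the zeros of `f` in the disc,
with multiplicities given by `ord`. -/
def zeroMassMeasure (f : ℂ → ℂ) (ord : ℂ → ℕ) : Measure ℂ :=
  Measure.sum (fun w : {w : ℂ // w ∈ ball (0 : ℂ) 1 ∧ f w = 0} =>
    ((ord (w : ℂ) : ℝ≥0∞) * ENNReal.ofReal (1 - ‖(w : ℂ)‖ ^ 2)) • Measure.dirac (w : ℂ))

/-- The dyadic subarc of generation `p.1` and index `p.2` of the (half-open) arc
with center `ξ` and normalized length `t`, obtained by repeated bisection. -/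
def dyadicArc (ξ : ℂ) (t : ℝ) (p : ℕ × ℕ) : Set ℂ :=
  {η : ℂ | ∃ θ : ℝ,
    -(Real.pi * t) + 2 * Real.pi * t * p.2 / 2 ^ p.1 ≤ θ ∧
    θ < -(Real.pi * t) + 2 * Real.pi * t * (p.2 + 1) / 2 ^ p.1 ∧
    η = Complex.exp (θ * Complex.I) * ξ}



lemma normsq_identity (w z : ℂ) :
    ‖1 - (starRingEnd ℂ) w * z‖ ^ 2 - ‖z - w‖ ^ 2 = (1 - ‖w‖^2) * (1 - ‖z‖^2) := by
  simp only [Complex.sq_norm, Complex.normSq_apply, Complex.sub_re,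
    Complex.sub_im, Complex.mul_re, Complex.mul_im, Complex.one_re, Complex.one_im,
    Complex.conj_re, Complex.conj_im]
  ring

lemma denom_pos (w z : ℂ) (hw : ‖w‖ < 1) (hz : ‖z‖ < 1) :
    0 < ‖1 - (starRingEnd ℂ) w * z‖ := by
  have h := normsq_identity w z
  nlinarith [sq_nonneg ‖z - w‖, norm_nonneg w, norm_nonneg z,
    norm_nonneg (1 - (starRingEnd ℂ) w * z), mul_pos (by nlinarith [norm_nonneg w] : (0:ℝ) < 1 - ‖w‖^2) (by nlinarith [norm_nonneg z] : (0:ℝ) < 1 - ‖z‖^2)]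

lemma blaschke_le_one (w z : ℂ) (hw : ‖w‖ < 1) (hz : ‖z‖ < 1) :
    ‖(z - w) / (1 - (starRingEnd ℂ) w * z)‖ ≤ 1 := by
  rw [norm_div, div_le_one (denom_pos w z hw hz)]
  have h := normsq_identity w z
  nlinarith [sq_nonneg (‖z - w‖ - ‖1 - (starRingEnd ℂ) w * z‖), denom_pos w z hw hz,
    norm_nonneg (z - w), norm_nonneg w, norm_nonneg z,
    mul_pos (by nlinarith [norm_nonneg w] : (0:ℝ) < 1 - ‖w‖^2) (by nlinarith [norm_nonneg z] : (0:ℝ) < 1 - ‖z‖^2)]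

lemma key_ineq (w z : ℂ) (hw : ‖w‖ < 1) (hz : ‖z‖ < 1) (hne : z ≠ w) :
    (1 - ‖w‖^2) * ((1 - ‖z‖^2) / ‖1 - (starRingEnd ℂ) w * z‖^2) ≤
      -2 * Real.log ‖(z - w) / (1 - (starRingEnd ℂ) w * z)‖ := by
  have hdpos : 0 < ‖1 - (starRingEnd ℂ) w * z‖ := denom_pos w z hw hz
  have hden_ne : (1 - (starRingEnd ℂ) w * z) ≠ 0 := norm_pos_iff.mp hdpos
  set d := ‖1 - (starRingEnd ℂ) w * z‖ with hd
  set r := ‖(z - w) / (1 - (starRingEnd ℂ) w * z)‖ with hr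
  have hrpos : 0 < r := norm_pos_iff.mpr (div_ne_zero (sub_ne_zero.mpr hne) hden_ne)
  have hr2 : r ^ 2 = ‖z - w‖^2 / d^2 := by rw [hr, norm_div, div_pow]
  have hkey : d^2 - ‖z - w‖^2 = (1 - ‖w‖^2) * (1 - ‖z‖^2) := by
    rw [hd]; exact normsq_identity w z
  have hd2 : (d:ℝ)^2 ≠ 0 := by positivity
  have hrhs : (1 - ‖w‖^2) * ((1 - ‖z‖^2) / d^2) = (d^2 - ‖z - w‖^2) / d^2 := by
    rw [hkey]; exact (mul_div_assoc _ _ _).symm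
  have hident : 1 - r^2 = (1 - ‖w‖^2) * ((1 - ‖z‖^2) / d^2) := by
    rw [hr2, hrhs, sub_div, div_self hd2]
  have hlog : Real.log (r^2) ≤ r^2 - 1 := Real.log_le_sub_one_of_pos (by positivity)
  have hlogr : Real.log (r^2) = 2 * Real.log r := by
    rw [sq, Real.log_mul hrpos.ne' hrpos.ne']; ring
  linarith

lemma blaschke_log_nonneg (w z : ℂ) (hw : ‖w‖ < 1) (hz : ‖z‖ < 1) :
    0 ≤ -2 * Real.log ‖(z - w) / (1 - (starRingEnd ℂ) w * z)‖ := by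
  have h := Real.log_nonpos (norm_nonneg _) (blaschke_le_one w z hw hz)
  linarith

lemma sphere_denom (ξ z : ℂ) (hξ : ‖ξ‖ = 1) :
    ‖1 - (starRingEnd ℂ) ξ * z‖ = ‖ξ - z‖ := by
  have hns : Complex.normSq ξ = 1 := by
    rw [Complex.normSq_eq_norm_sq, hξ]; norm_num
  have h1 : ξ * ((starRingEnd ℂ) ξ) = 1 := by
    rw [Complex.mul_conj, hns]; simp
  calc ‖1 - (starRingEnd ℂ) ξ * z‖ = ‖ξ‖ * ‖1 - (starRingEnd ℂ) ξ * z‖ := by rw [hξ, one_mul]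
    _ = ‖ξ * (1 - (starRingEnd ℂ) ξ * z)‖ := (norm_mul _ _).symm
    _ = ‖ξ - z‖ := by rw [mul_sub, mul_one, ← mul_assoc, h1, one_mul]

/-- Lemma 3(a): `log |f(z)|⁻² ≥ P[μ](z)`. -/
theorem statement2
    (f : ℂ → ℂ) (hf : DifferentiableOn ℂ f (ball (0 : ℂ) 1))
    (hmap : ∀ z ∈ ball (0 : ℂ) 1, f z ∈ ball (0 : ℂ) 1)
    (hne : ∃ z ∈ ball (0 : ℂ) 1, f z ≠ 0)
    (ord : ℂ → ℕ)
    (hord : ∀ w ∈ ball (0 : ℂ) 1, f w = 0 →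
      ∃ g : ℂ → ℂ, AnalyticAt ℂ g w ∧ g w ≠ 0 ∧
        ∀ᶠ ζ in nhds w, f ζ = (ζ - w) ^ ord w * g ζ)
    (σ : Measure ℂ) [IsFiniteMeasure σ] (hsupp : σ (sphere (0 : ℂ) 1)ᶜ = 0)
    (hsummable : ∀ z ∈ ball (0 : ℂ) 1, f z ≠ 0 →
      Summable (fun w : {w : ℂ // w ∈ ball (0 : ℂ) 1 ∧ f w = 0} =>
        (ord (w : ℂ) : ℝ) *
          (-(2 : ℝ) * Real.log ‖(z - (w : ℂ)) / (1 - (starRingEnd ℂ) (w : ℂ) * z)‖)))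
    (hfac : ∀ z ∈ ball (0 : ℂ) 1, f z ≠ 0 →
      -(2 : ℝ) * Real.log ‖f z‖ =
        (∑' w : {w : ℂ // w ∈ ball (0 : ℂ) 1 ∧ f w = 0},
          (ord (w : ℂ) : ℝ) *
            (-(2 : ℝ) * Real.log ‖(z - (w : ℂ)) / (1 - (starRingEnd ℂ) (w : ℂ) * z)‖)) +
        2 * poissonInt σ z)
    (μ : Measure ℂ) (hμ : μ = zeroMassMeasure f ord + (2 : ℝ≥0∞) • σ) :
    ∀ z ∈ ball (0 : ℂ) 1, f z ≠ 0 →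
      poissonMu μ z ≤ ENNReal.ofReal (-(2 : ℝ) * Real.log ‖f z‖) := by
  intro z hz hfz
  have hz1 : ‖z‖ < 1 := mem_ball_zero_iff.mp hz
  have hznn : (0:ℝ) ≤ 1 - ‖z‖ ^ 2 := by nlinarith [norm_nonneg z]
  have hsum := hsummable z hz hfz
  have hnonneg : ∀ w : {w : ℂ // w ∈ ball (0 : ℂ) 1 ∧ f w = 0},
      0 ≤ (ord (w : ℂ) : ℝ) *
        (-(2 : ℝ) * Real.log ‖(z - (w : ℂ)) / (1 - (starRingEnd ℂ) (w : ℂ) * z)‖) := by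
    intro w
    have hw1 : ‖(w : ℂ)‖ < 1 := mem_ball_zero_iff.mp w.2.1
    have := blaschke_log_nonneg (w : ℂ) z hw1 hz1
    have : 0 ≤ -(2:ℝ) * Real.log ‖(z - (w : ℂ)) / (1 - (starRingEnd ℂ) (w : ℂ) * z)‖ := by
      linarith
    exact mul_nonneg (Nat.cast_nonneg _) this
  rw [hμ, poissonMu, lintegral_add_measure, lintegral_smul_measure, hfac z hz hfz]
  have hzm : (∫⁻ w, ENNReal.ofReal ((1 - ‖z‖ ^ 2) / ‖1 - (starRingEnd ℂ) w * z‖ ^ 2)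
        ∂(zeroMassMeasure f ord)) =
      ∑' w : {w : ℂ // w ∈ ball (0 : ℂ) 1 ∧ f w = 0},
        ((ord (w : ℂ) : ℝ≥0∞) * ENNReal.ofReal (1 - ‖(w : ℂ)‖ ^ 2)) *
          ENNReal.ofReal ((1 - ‖z‖ ^ 2) / ‖1 - (starRingEnd ℂ) (w : ℂ) * z‖ ^ 2) := by
    rw [zeroMassMeasure, lintegral_sum_measure]
    refine tsum_congr fun w => ?_
    rw [lintegral_smul_measure, lintegral_dirac, smul_eq_mul]
  rw [hzm]
  have hterm : ∀ w : {w : ℂ // w ∈ ball (0 : ℂ) 1 ∧ f w = 0},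
      ((ord (w : ℂ) : ℝ≥0∞) * ENNReal.ofReal (1 - ‖(w : ℂ)‖ ^ 2)) *
          ENNReal.ofReal ((1 - ‖z‖ ^ 2) / ‖1 - (starRingEnd ℂ) (w : ℂ) * z‖ ^ 2) ≤
        ENNReal.ofReal ((ord (w : ℂ) : ℝ) *
          (-(2 : ℝ) * Real.log ‖(z - (w : ℂ)) / (1 - (starRingEnd ℂ) (w : ℂ) * z)‖)) := by
    intro w
    have hw1 : ‖(w : ℂ)‖ < 1 := mem_ball_zero_iff.mp w.2.1
    have hwnn : (0:ℝ) ≤ 1 - ‖(w : ℂ)‖ ^ 2 := by nlinarith [norm_nonneg (w : ℂ)]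
    have hnez : z ≠ (w : ℂ) := fun h => hfz (h ▸ w.2.2)
    have hkey := key_ineq (w : ℂ) z hw1 hz1 hnez
    rw [show ((ord (w : ℂ) : ℝ≥0∞)) = ENNReal.ofReal (ord (w : ℂ) : ℝ) from
        (ENNReal.ofReal_natCast _).symm,
      ← ENNReal.ofReal_mul (Nat.cast_nonneg _),
      ← ENNReal.ofReal_mul (mul_nonneg (Nat.cast_nonneg _) hwnn)]
    apply ENNReal.ofReal_le_ofReal
    rw [mul_assoc]
    exact mul_le_mul_of_nonneg_left hkey (Nat.cast_nonneg _)
  -- sigma part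
  have hae : ∀ᵐ ξ ∂σ, ξ ∈ sphere (0:ℂ) 1 := by
    rw [ae_iff]
    exact hsupp
  have hσ1 : (∫⁻ ξ, ENNReal.ofReal ((1 - ‖z‖ ^ 2) / ‖1 - (starRingEnd ℂ) ξ * z‖ ^ 2) ∂σ) =
      ∫⁻ ξ, ENNReal.ofReal ((1 - ‖z‖ ^ 2) / ‖ξ - z‖ ^ 2) ∂σ := by
    apply lintegral_congr_ae
    filter_upwards [hae] with ξ hξ
    rw [sphere_denom ξ z (by simpa using hξ)]
  have hgm : Measurable (fun ξ : ℂ => (1 - ‖z‖ ^ 2) / ‖ξ - z‖ ^ 2) :=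
    measurable_const.div (((measurable_id.sub_const z).norm).pow_const 2)
  have hdz : (0:ℝ) < 1 - ‖z‖ := by linarith
  have hint : Integrable (fun ξ : ℂ => (1 - ‖z‖ ^ 2) / ‖ξ - z‖ ^ 2) σ := by
    refine Integrable.mono' (integrable_const ((1 - ‖z‖ ^ 2) / (1 - ‖z‖) ^ 2))
      hgm.aestronglyMeasurable ?_
    filter_upwards [hae] with ξ hξ
    have hξ1 : ‖ξ‖ = 1 := by simpa using hξ
    have h1 : 1 - ‖z‖ ≤ ‖ξ - z‖ := by
      have := norm_sub_norm_le ξ z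
      linarith [hξ1 ▸ this]
    have h2 : (1 - ‖z‖) ^ 2 ≤ ‖ξ - z‖ ^ 2 := by nlinarith
    rw [Real.norm_eq_abs, _root_.abs_of_nonneg (div_nonneg hznn (sq_nonneg _))]
    exact div_le_div_of_nonneg_left hznn (by positivity) h2
  have hgnn : 0 ≤ᵐ[σ] (fun ξ : ℂ => (1 - ‖z‖ ^ 2) / ‖ξ - z‖ ^ 2) :=
    Filter.Eventually.of_forall fun ξ => div_nonneg hznn (sq_nonneg _)
  have hσ2 : (∫⁻ ξ, ENNReal.ofReal ((1 - ‖z‖ ^ 2) / ‖ξ - z‖ ^ 2) ∂σ) =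
      ENNReal.ofReal (poissonInt σ z) := by
    rw [poissonInt, ofReal_integral_eq_lintegral_ofReal hint hgnn]
  have hPnn : 0 ≤ poissonInt σ z :=
    integral_nonneg fun ξ => div_nonneg hznn (sq_nonneg _)
  have hTnn : 0 ≤ ∑' w : {w : ℂ // w ∈ ball (0 : ℂ) 1 ∧ f w = 0},
      (ord (w : ℂ) : ℝ) *
        (-(2 : ℝ) * Real.log ‖(z - (w : ℂ)) / (1 - (starRingEnd ℂ) (w : ℂ) * z)‖) :=
    tsum_nonneg hnonneg
  rw [ENNReal.ofReal_add hTnn (by positivity)]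
  apply add_le_add
  · rw [ENNReal.ofReal_tsum_of_nonneg hnonneg hsum]
    exact ENNReal.tsum_le_tsum hterm
  · rw [hσ1, hσ2, ENNReal.ofReal_mul (by norm_num : (0:ℝ) ≤ 2)]
    norm_num

end
end

section
/- Let f : 𝔻 → 𝔻 be analytic, not identically 0, and let σ be a finite positive Borel measure on ∂𝔻 such that log|f(z)|^{-2} = Σ_{w∈𝔻, f(w)=0} m_w · log|(z−w)/(1−w̄z)|^{-2} + 2∫_{∂𝔻}(1−|z|²)/|ξ−z|² dσ(ξ) for every z ∈ 𝔻 with f(z) ≠ 0 (m_w the order of the zero of f at w). Set μ = Σ_{w : f(w)=0} m_w(1−|w|²)δ_w + 2σ on 𝔻̄ and P[μ](z) = ∫_{𝔻̄} (1−|z|²)/|1−w̄z|² dμ(w). Then for every δ > 0 there exists a constant C = C(δ) > 0 such that log|f(z)|^{-2} ≤ C·P[μ](z) whenever z ∈ 𝔻 satisfies d_h(z, {w ∈ 𝔻 : f(w) = 0}) ≥ δ; moreover C(δ) → 1 as δ → ∞. -/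
open MeasureTheory Complex Set Metric Filter
open scoped ENNReal NNReal Topology

noncomputable section

lemma aux_normSq_identity (z w : ℂ) :
    ‖1 - (starRingEnd ℂ) w * z‖ ^ 2 - ‖z - w‖ ^ 2 = (1 - ‖z‖ ^ 2) * (1 - ‖w‖ ^ 2) := by
  simp only [Complex.sq_norm, Complex.normSq_apply, Complex.sub_re,
    Complex.sub_im, Complex.mul_re, Complex.mul_im, Complex.one_re, Complex.one_im,
    Complex.conj_re, Complex.conj_im]
  ring

lemma aux_den_ne (z w : ℂ) (hz : ‖z‖ < 1) (hw : ‖w‖ < 1) :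
    1 - (starRingEnd ℂ) w * z ≠ 0 := by
  intro h
  have h2 : (starRingEnd ℂ) w * z = 1 := by linear_combination -h
  have : ‖(starRingEnd ℂ) w * z‖ < 1 := by
    rw [norm_mul, RCLike.norm_conj]
    nlinarith [norm_nonneg w, norm_nonneg z]
  rw [h2] at this; simp at this

lemma aux_one_sub_rho (z w : ℂ) (hz : ‖z‖ < 1) (hw : ‖w‖ < 1) :
    1 - ‖(z - w) / (1 - (starRingEnd ℂ) w * z)‖ ^ 2 =
      (1 - ‖w‖ ^ 2) * ((1 - ‖z‖ ^ 2) / ‖1 - (starRingEnd ℂ) w * z‖ ^ 2) := by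
  have hden := aux_den_ne z w hz hw
  have hden2 : (‖1 - (starRingEnd ℂ) w * z‖ : ℝ) ^ 2 ≠ 0 := by
    have := norm_ne_zero_iff.mpr hden; positivity
  rw [norm_div, div_pow, one_sub_div hden2, aux_normSq_identity]
  rw [mul_comm (1 - ‖z‖ ^ 2), mul_div_assoc]

lemma aux_rho_lt_one (z w : ℂ) (hz : ‖z‖ < 1) (hw : ‖w‖ < 1) :
    ‖(z - w) / (1 - (starRingEnd ℂ) w * z)‖ < 1 := by
  have h := aux_one_sub_rho z w hz hw
  have hden := aux_den_ne z w hz hw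
  have hden' : (0:ℝ) < ‖1 - (starRingEnd ℂ) w * z‖ ^ 2 := by
    have := norm_ne_zero_iff.mpr hden; positivity
  have h1 : 0 < 1 - ‖w‖ ^ 2 := by nlinarith [norm_nonneg w]
  have h2 : 0 < 1 - ‖z‖ ^ 2 := by nlinarith [norm_nonneg z]
  have hpos : 0 < (1 - ‖w‖ ^ 2) * ((1 - ‖z‖ ^ 2) / ‖1 - (starRingEnd ℂ) w * z‖ ^ 2) :=
    mul_pos h1 (div_pos h2 hden')
  nlinarith [norm_nonneg ((z - w) / (1 - (starRingEnd ℂ) w * z))]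

lemma aux_key (t ρ : ℝ) (ht : 0 < t) (htρ : t ≤ ρ) (hρ : ρ < 1) :
    -2 * Real.log ρ ≤ t⁻¹ ^ 2 * (1 - ρ ^ 2) := by
  have hρ0 : 0 < ρ := lt_of_lt_of_le ht htρ
  have h1 : Real.log ((ρ ^ 2)⁻¹) ≤ (ρ ^ 2)⁻¹ - 1 :=
    Real.log_le_sub_one_of_pos (by positivity)
  rw [Real.log_inv, Real.log_pow] at h1
  have h2 : (ρ ^ 2)⁻¹ - 1 = (1 - ρ ^ 2) / ρ ^ 2 := by field_simp
  have h3 : (1 - ρ ^ 2) / ρ ^ 2 ≤ (1 - ρ ^ 2) / t ^ 2 := by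
    apply div_le_div_of_nonneg_left (by nlinarith) (by positivity)
    nlinarith
  rw [h2] at h1
  have h4 : (1 - ρ ^ 2) / t ^ 2 = t⁻¹ ^ 2 * (1 - ρ ^ 2) := by
    field_simp
  push_cast at h1
  linarith

lemma aux_t_le_rho (δ : ℝ) (z w : ℂ) (hz : ‖z‖ < 1) (hw : ‖w‖ < 1)
    (hfar : δ ≤ hypDist z w) :
    (Real.exp (2 * δ) - 1) / (Real.exp (2 * δ) + 1) ≤
      ‖(z - w) / (1 - (starRingEnd ℂ) w * z)‖ := by
  set ρ := ‖(z - w) / (1 - (starRingEnd ℂ) w * z)‖ with hρdef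
  have hρ0 : 0 ≤ ρ := norm_nonneg _
  have hρ1 : ρ < 1 := aux_rho_lt_one z w hz hw
  have hfrac : 0 < (1 + ρ) / (1 - ρ) := by
    apply div_pos <;> linarith
  have h1 : Real.exp (2 * δ) ≤ (1 + ρ) / (1 - ρ) := by
    have : 2 * δ ≤ Real.log ((1 + ρ) / (1 - ρ)) := by
      unfold hypDist at hfar; linarith
    calc Real.exp (2 * δ) ≤ Real.exp (Real.log ((1 + ρ) / (1 - ρ))) :=
          Real.exp_le_exp.mpr this
      _ = (1 + ρ) / (1 - ρ) := Real.exp_log hfrac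
  have h2 : Real.exp (2 * δ) * (1 - ρ) ≤ 1 + ρ := by
    rw [← le_div_iff₀ (by linarith)] ; exact h1
  rw [div_le_iff₀ (by positivity)]
  nlinarith [Real.exp_pos (2 * δ)]

lemma aux_tendsto_C :
    Tendsto (fun δ : ℝ => ((Real.exp (2 * δ) - 1) / (Real.exp (2 * δ) + 1))⁻¹ ^ 2)
      atTop (nhds 1) := by
  have hE : Tendsto (fun δ : ℝ => Real.exp (2 * δ)) atTop atTop :=
    Real.tendsto_exp_atTop.comp (tendsto_atTop_atTop_of_monotone
      (fun a b hab => by linarith) (fun b => ⟨b / 2, by linarith⟩))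
  have h0 : Tendsto (fun x : ℝ => (x - 1) / (x + 1)) atTop (nhds 1) := by
    have hd : Tendsto (fun x : ℝ => 2 / (x + 1)) atTop (nhds 0) :=
      Tendsto.div_atTop tendsto_const_nhds (tendsto_atTop_add_const_right _ 1 tendsto_id)
    have : Tendsto (fun x : ℝ => 1 - 2 / (x + 1)) atTop (nhds 1) := by
      simpa using tendsto_const_nhds.sub hd
    refine this.congr' ?_
    filter_upwards [eventually_gt_atTop (0:ℝ)] with x hx
    field_simp
    ring
  have h1 : Tendsto (fun δ : ℝ => (Real.exp (2 * δ) - 1) / (Real.exp (2 * δ) + 1))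
      atTop (nhds 1) := h0.comp hE
  have h2 := (h1.inv₀ one_ne_zero).pow 2
  simpa using h2


/-- Lemma 3(b): `log |f(z)|⁻² ≤ C(δ) P[μ](z)` far from the zeros, with `C(δ) → 1`. -/
theorem statement3
    (f : ℂ → ℂ) (hf : DifferentiableOn ℂ f (ball (0 : ℂ) 1))
    (hmap : ∀ z ∈ ball (0 : ℂ) 1, f z ∈ ball (0 : ℂ) 1)
    (hne : ∃ z ∈ ball (0 : ℂ) 1, f z ≠ 0)
    (ord : ℂ → ℕ)
    (hord : ∀ w ∈ ball (0 : ℂ) 1, f w = 0 →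
      ∃ g : ℂ → ℂ, AnalyticAt ℂ g w ∧ g w ≠ 0 ∧
        ∀ᶠ ζ in nhds w, f ζ = (ζ - w) ^ ord w * g ζ)
    (σ : Measure ℂ) [IsFiniteMeasure σ] (hsupp : σ (sphere (0 : ℂ) 1)ᶜ = 0)
    (hsummable : ∀ z ∈ ball (0 : ℂ) 1, f z ≠ 0 →
      Summable (fun w : {w : ℂ // w ∈ ball (0 : ℂ) 1 ∧ f w = 0} =>
        (ord (w : ℂ) : ℝ) *
          (-(2 : ℝ) * Real.log ‖(z - (w : ℂ)) / (1 - (starRingEnd ℂ) (w : ℂ) * z)‖)))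
    (hfac : ∀ z ∈ ball (0 : ℂ) 1, f z ≠ 0 →
      -(2 : ℝ) * Real.log ‖f z‖ =
        (∑' w : {w : ℂ // w ∈ ball (0 : ℂ) 1 ∧ f w = 0},
          (ord (w : ℂ) : ℝ) *
            (-(2 : ℝ) * Real.log ‖(z - (w : ℂ)) / (1 - (starRingEnd ℂ) (w : ℂ) * z)‖)) +
        2 * poissonInt σ z)
    (μ : Measure ℂ) (hμ : μ = zeroMassMeasure f ord + (2 : ℝ≥0∞) • σ) :
    ∃ C : ℝ → ℝ, Tendsto C atTop (nhds 1) ∧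
      ∀ δ > (0 : ℝ), 0 < C δ ∧
        ∀ z ∈ ball (0 : ℂ) 1,
          (∀ w ∈ ball (0 : ℂ) 1, f w = 0 → δ ≤ hypDist z w) →
          ENNReal.ofReal (-(2 : ℝ) * Real.log ‖f z‖) ≤
            ENNReal.ofReal (C δ) * poissonMu μ z := by
  refine ⟨fun δ => ((Real.exp (2 * δ) - 1) / (Real.exp (2 * δ) + 1))⁻¹ ^ 2,
    aux_tendsto_C, ?_⟩
  intro δ hδ
  set t : ℝ := (Real.exp (2 * δ) - 1) / (Real.exp (2 * δ) + 1) with ht_def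
  have hE1 : 1 < Real.exp (2 * δ) := by
    rw [show (1:ℝ) = Real.exp 0 by simp]
    exact Real.exp_lt_exp.mpr (by linarith)
  have ht0 : 0 < t := div_pos (by linarith) (by linarith)
  have ht1 : t < 1 := by
    rw [div_lt_one (by linarith)]; linarith
  set Cδ : ℝ := t⁻¹ ^ 2 with hC_def
  have hC0 : 0 < Cδ := by positivity
  have hC1 : 1 ≤ Cδ := by
    rw [hC_def]
    have : 1 ≤ t⁻¹ := (one_le_inv₀ ht0).mpr ht1.le
    nlinarith
  refine ⟨hC0, ?_⟩
  intro z hz hzfar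
  have hz1 : ‖z‖ < 1 := by simpa [mem_ball, dist_zero_right] using hz
  have hz2 : 0 < 1 - ‖z‖ ^ 2 := by nlinarith [norm_nonneg z]
  have hfz : f z ≠ 0 := by
    intro h0
    have h1 := hzfar z hz h0
    have h2 : hypDist z z = 0 := by simp [hypDist]
    rw [h2] at h1; linarith
  -- notation
  set Z := {w : ℂ // w ∈ ball (0 : ℂ) 1 ∧ f w = 0}
  set K : ℂ → ℝ := fun w => (1 - ‖z‖ ^ 2) / ‖1 - (starRingEnd ℂ) w * z‖ ^ 2 with hK_def
  set a : Z → ℝ := fun w =>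
    (ord (w : ℂ) : ℝ) *
      (-(2 : ℝ) * Real.log ‖(z - (w : ℂ)) / (1 - (starRingEnd ℂ) (w : ℂ) * z)‖) with ha_def
  have hwball : ∀ w : Z, ‖(w : ℂ)‖ < 1 := fun w => by
    simpa [mem_ball, dist_zero_right] using w.2.1
  -- nonnegativity of a
  have ha_nonneg : ∀ w : Z, 0 ≤ a w := by
    intro w
    have hρ1 := aux_rho_lt_one z w hz1 (hwball w)
    have hlog : Real.log ‖(z - (w : ℂ)) / (1 - (starRingEnd ℂ) (w : ℂ) * z)‖ ≤ 0 :=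
      Real.log_nonpos (norm_nonneg _) hρ1.le
    have : 0 ≤ -(2 : ℝ) * Real.log ‖(z - (w : ℂ)) / (1 - (starRingEnd ℂ) (w : ℂ) * z)‖ := by
      linarith
    positivity
  -- per-term bound
  have ha_bound : ∀ w : Z,
      a w ≤ Cδ * ((ord (w : ℂ) : ℝ) * ((1 - ‖(w : ℂ)‖ ^ 2) * K (w : ℂ))) := by
    intro w
    have hw1 := hwball w
    have hρ1 := aux_rho_lt_one z w hz1 hw1
    have htρ := aux_t_le_rho δ z w hz1 hw1 (hzfar (w : ℂ) w.2.1 w.2.2)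
    have hkey := aux_key t _ ht0 htρ hρ1
    have hone := aux_one_sub_rho z w hz1 hw1
    rw [hone] at hkey
    have hmn : (0:ℝ) ≤ (ord (w : ℂ) : ℝ) := Nat.cast_nonneg _
    calc a w ≤ (ord (w : ℂ) : ℝ) * (Cδ * ((1 - ‖(w : ℂ)‖ ^ 2) * K (w : ℂ))) := by
          apply mul_le_mul_of_nonneg_left _ hmn
          simpa [hC_def, hK_def, mul_assoc] using hkey
      _ = Cδ * ((ord (w : ℂ) : ℝ) * ((1 - ‖(w : ℂ)‖ ^ 2) * K (w : ℂ))) := by ring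
  -- decompose poissonMu
  have hK_nonneg : ∀ w : ℂ, 0 ≤ K w := by
    intro w; rw [hK_def]; positivity
  have hA : poissonMu (zeroMassMeasure f ord) z =
      ∑' w : Z, ((ord (w : ℂ) : ℝ≥0∞) * ENNReal.ofReal (1 - ‖(w : ℂ)‖ ^ 2)) *
        ENNReal.ofReal (K (w : ℂ)) := by
    rw [poissonMu, zeroMassMeasure, lintegral_sum_measure]
    congr 1
    funext w
    rw [lintegral_smul_measure, lintegral_dirac, smul_eq_mul]
  have hmu : poissonMu μ z = poissonMu (zeroMassMeasure f ord) z +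
      2 * poissonMu σ z := by
    rw [hμ, poissonMu, lintegral_add_measure, lintegral_smul_measure]
    rfl
  -- bound the sum part
  have hsum : ENNReal.ofReal (∑' w : Z, a w) ≤
      ENNReal.ofReal Cδ * poissonMu (zeroMassMeasure f ord) z := by
    rw [ENNReal.ofReal_tsum_of_nonneg ha_nonneg (hsummable z hz hfz), hA,
      ← ENNReal.tsum_mul_left]
    apply ENNReal.tsum_le_tsum
    intro w
    calc ENNReal.ofReal (a w)
        ≤ ENNReal.ofReal (Cδ * ((ord (w : ℂ) : ℝ) * ((1 - ‖(w : ℂ)‖ ^ 2) * K (w : ℂ)))) :=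
          ENNReal.ofReal_le_ofReal (ha_bound w)
      _ = ENNReal.ofReal Cδ * (((ord (w : ℂ) : ℝ≥0∞) *
            ENNReal.ofReal (1 - ‖(w : ℂ)‖ ^ 2)) * ENNReal.ofReal (K (w : ℂ))) := by
          have hw2 : (0:ℝ) ≤ 1 - ‖(w : ℂ)‖ ^ 2 := by nlinarith [hwball w, norm_nonneg (w : ℂ)]
          rw [ENNReal.ofReal_mul hC0.le, ENNReal.ofReal_mul (Nat.cast_nonneg _),
            ENNReal.ofReal_mul hw2, ENNReal.ofReal_natCast]
          ring
  -- bound the sigma part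
  have hsigma : ENNReal.ofReal (2 * poissonInt σ z) ≤ 2 * poissonMu σ z := by
    have hgnn : ∀ ξ : ℂ, 0 ≤ (1 - ‖z‖ ^ 2) / ‖ξ - z‖ ^ 2 := by
      intro ξ; positivity
    have hPB : ENNReal.ofReal (poissonInt σ z) ≤ poissonMu σ z := by
      have hae : ∀ᵐ ξ ∂σ, ξ ∈ sphere (0 : ℂ) 1 := by
        rw [MeasureTheory.ae_iff]
        exact hsupp
      have hcongr : ∫⁻ ξ, ENNReal.ofReal ((1 - ‖z‖ ^ 2) / ‖ξ - z‖ ^ 2) ∂σ = poissonMu σ z := by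
        rw [poissonMu]
        apply lintegral_congr_ae
        filter_upwards [hae] with ξ hξ
        have hξ1 : ‖ξ‖ = 1 := by simpa [mem_sphere_iff_norm] using hξ
        have : ‖1 - (starRingEnd ℂ) ξ * z‖ = ‖ξ - z‖ := by
          have h2 : (starRingEnd ℂ) ξ * (ξ - z) = 1 - (starRingEnd ℂ) ξ * z := by
            have h3 : (starRingEnd ℂ) ξ * ξ = 1 := by
              rw [← Complex.normSq_eq_conj_mul_self]
              have h4 : Complex.normSq ξ = 1 := by
                rw [Complex.normSq_eq_norm_sq, hξ1]; norm_num
              rw [h4]; norm_num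
            rw [mul_sub, h3]
          rw [← h2, norm_mul, RCLike.norm_conj, hξ1, one_mul]
        rw [this]
      rw [← hcongr]
      by_cases hint : Integrable (fun ξ => (1 - ‖z‖ ^ 2) / ‖ξ - z‖ ^ 2) σ
      · rw [poissonInt, ofReal_integral_eq_lintegral_ofReal hint (ae_of_all _ hgnn)]
      · rw [poissonInt, integral_undef hint]
        simp
    calc ENNReal.ofReal (2 * poissonInt σ z) = 2 * ENNReal.ofReal (poissonInt σ z) := by
          rw [ENNReal.ofReal_mul (by norm_num)]; norm_num
      _ ≤ 2 * poissonMu σ z := by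
          exact mul_le_mul_right hPB 2
  -- combine
  rw [hfac z hz hfz, hmu]
  calc ENNReal.ofReal ((∑' w : Z, a w) + 2 * poissonInt σ z)
      ≤ ENNReal.ofReal (∑' w : Z, a w) + ENNReal.ofReal (2 * poissonInt σ z) :=
        ENNReal.ofReal_add_le
    _ ≤ ENNReal.ofReal Cδ * poissonMu (zeroMassMeasure f ord) z + 2 * poissonMu σ z :=
        add_le_add hsum hsigma
    _ ≤ ENNReal.ofReal Cδ * poissonMu (zeroMassMeasure f ord) z +
          ENNReal.ofReal Cδ * (2 * poissonMu σ z) := by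
        refine add_le_add_right ?_ _
        nth_rewrite 1 [← one_mul (2 * poissonMu σ z)]
        exact mul_le_mul_left (ENNReal.one_le_ofReal.mpr hC1) _
    _ = ENNReal.ofReal Cδ * (poissonMu (zeroMassMeasure f ord) z + 2 * poissonMu σ z) := by
        rw [mul_add]


end
end

section
/- Let f : 𝔻 → 𝔻 be analytic. If there exists a constant c ∈ (0,1) such that sup{D_h(f)(z) : z ∈ 𝔻, |f(z)| ≥ c} < 1, then sup{D_h(f)(z) : z ∈ 𝔻} < 1. -/
open MeasureTheory Complex Set Metric Filter
open scoped ENNReal NNReal Topology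

noncomputable section

set_option maxHeartbeats 1000000

namespace SP5

/-- Möbius transform of the disc. -/
def mob (a z : ℂ) : ℂ := (a - z) / (1 - (starRingEnd ℂ) a * z)

lemma den_ne (a z : ℂ) (ha : ‖a‖ < 1) (hz : ‖z‖ < 1) : 1 - (starRingEnd ℂ) a * z ≠ 0 := by
  intro h
  have h1 : ‖(starRingEnd ℂ) a * z‖ < 1 := by
    rw [norm_mul, RCLike.norm_conj]
    nlinarith [norm_nonneg a, norm_nonneg z]
  have : (1 : ℂ) = (starRingEnd ℂ) a * z := by linear_combination h
  rw [← this] at h1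
  simp at h1

lemma den_norm_pos (a z : ℂ) (ha : ‖a‖ < 1) (hz : ‖z‖ < 1) :
    0 < ‖1 - (starRingEnd ℂ) a * z‖ := norm_pos_iff.2 (den_ne a z ha hz)

lemma key_identity (a z : ℂ) :
    ‖1 - (starRingEnd ℂ) a * z‖ ^ 2 - ‖a - z‖ ^ 2 = (1 - ‖a‖ ^ 2) * (1 - ‖z‖ ^ 2) := by
  have e1 : ‖a - z‖ ^ 2 = normSq (a - z) := by rw [normSq_eq_norm_sq]
  have e2 : ‖1 - (starRingEnd ℂ) a * z‖ ^ 2 = normSq (1 - (starRingEnd ℂ) a * z) := by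
    rw [normSq_eq_norm_sq]
  have e3 : ‖a‖ ^ 2 = normSq a := by rw [normSq_eq_norm_sq]
  have e4 : ‖z‖ ^ 2 = normSq z := by rw [normSq_eq_norm_sq]
  rw [e1, e2, e3, e4]
  simp only [normSq_apply, Complex.sub_re, Complex.sub_im, Complex.mul_re, Complex.mul_im,
    Complex.one_re, Complex.one_im, Complex.conj_re, Complex.conj_im]
  ring

/-- Key identity. -/
lemma mob_identity (a z : ℂ) (ha : ‖a‖ < 1) (hz : ‖z‖ < 1) :
    1 - ‖mob a z‖ ^ 2 = (1 - ‖a‖ ^ 2) * (1 - ‖z‖ ^ 2) / ‖1 - (starRingEnd ℂ) a * z‖ ^ 2 := by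
  have hd := den_norm_pos a z ha hz
  have hk := key_identity a z
  rw [mob, norm_div, div_pow, eq_div_iff (by positivity), sub_mul, one_mul,
    div_mul_cancel₀ _ (by positivity)]
  linarith

lemma mob_norm_lt (a z : ℂ) (ha : ‖a‖ < 1) (hz : ‖z‖ < 1) : ‖mob a z‖ < 1 := by
  have hd := den_norm_pos a z ha hz
  have h := mob_identity a z ha hz
  have h1 : 0 < 1 - ‖a‖ ^ 2 := by nlinarith [norm_nonneg a]
  have h2 : 0 < 1 - ‖z‖ ^ 2 := by nlinarith [norm_nonneg z]
  have hpos : 0 < (1 - ‖a‖ ^ 2) * (1 - ‖z‖ ^ 2) / ‖1 - (starRingEnd ℂ) a * z‖ ^ 2 :=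
    div_pos (mul_pos h1 h2) (by positivity)
  nlinarith [norm_nonneg (mob a z)]

lemma mob_mapsTo (a : ℂ) (ha : ‖a‖ < 1) : MapsTo (mob a) (ball (0:ℂ) 1) (ball (0:ℂ) 1) := by
  intro z hz
  rw [mem_ball_zero_iff] at hz ⊢
  exact mob_norm_lt a z ha hz

lemma mob_mob (a z : ℂ) (ha : ‖a‖ < 1) (hz : ‖z‖ < 1) : mob a (mob a z) = z := by
  have hd := den_ne a z ha hz
  have h2 : 1 - (starRingEnd ℂ) a * a ≠ 0 := den_ne a a ha ha
  have hnum : 1 - (starRingEnd ℂ) a * ((a - z) / (1 - (starRingEnd ℂ) a * z))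
      = (1 - (starRingEnd ℂ) a * a) / (1 - (starRingEnd ℂ) a * z) := by
    field_simp; ring
  have hnum2 : a - (a - z) / (1 - (starRingEnd ℂ) a * z)
      = z * (1 - (starRingEnd ℂ) a * a) / (1 - (starRingEnd ℂ) a * z) := by
    rw [eq_div_iff hd, sub_mul, div_mul_cancel₀ _ hd]; ring
  rw [mob, mob, hnum, hnum2]
  rw [mul_div_assoc]
  exact mul_div_cancel_right₀ z (div_ne_zero h2 hd)


lemma mob_zero (a : ℂ) : mob a 0 = a := by simp [mob]

lemma mob_self (a : ℂ) (ha : ‖a‖ < 1) : mob a a = 0 := by simp [mob]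

lemma mob_hasDerivAt (a z : ℂ) (hd : 1 - (starRingEnd ℂ) a * z ≠ 0) :
    HasDerivAt (mob a) (((starRingEnd ℂ) a * a - 1) / (1 - (starRingEnd ℂ) a * z) ^ 2) z := by
  have h1 : HasDerivAt (fun z : ℂ => a - z) (-1) z := by
    simpa using (hasDerivAt_id z).const_sub a
  have h2 : HasDerivAt (fun z : ℂ => 1 - (starRingEnd ℂ) a * z) (-(starRingEnd ℂ) a) z := by
    simpa using ((hasDerivAt_id z).const_mul ((starRingEnd ℂ) a)).const_sub 1
  have h3 := h1.div h2 hd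
  have e : mob a = (fun z => a - z) / fun z => 1 - (starRingEnd ℂ) a * z := by
    funext u; simp [mob]
  rw [e]
  exact h3.congr_deriv (by ring)

lemma conj_mul_self_norm (a : ℂ) : (starRingEnd ℂ) a * a = ((‖a‖ ^ 2 : ℝ) : ℂ) := by
  rw [← Complex.normSq_eq_conj_mul_self]
  congr 1
  exact normSq_eq_norm_sq a

lemma one_sub_conj_self_norm (b : ℂ) (hb : ‖b‖ < 1) :
    ‖1 - (starRingEnd ℂ) b * b‖ = 1 - ‖b‖ ^ 2 := by
  rw [conj_mul_self_norm, show (1:ℂ) - ((‖b‖ ^ 2 : ℝ) : ℂ) = (((1 - ‖b‖ ^ 2 : ℝ)) : ℂ) by push_cast; ring,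
    Complex.norm_real, Real.norm_eq_abs]
  exact abs_of_nonneg (by nlinarith [norm_nonneg b])

lemma mob_deriv_norm (a z : ℂ) (ha : ‖a‖ < 1) (hd : 1 - (starRingEnd ℂ) a * z ≠ 0) :
    ‖((starRingEnd ℂ) a * a - 1) / (1 - (starRingEnd ℂ) a * z) ^ 2‖
      = (1 - ‖a‖ ^ 2) / ‖1 - (starRingEnd ℂ) a * z‖ ^ 2 := by
  rw [norm_div, norm_pow, conj_mul_self_norm]
  congr 1
  rw [show ((‖a‖ ^ 2 : ℝ) : ℂ) - 1 = (((‖a‖ ^ 2 - 1 : ℝ)) : ℂ) by push_cast; ring]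
  rw [Complex.norm_real, Real.norm_eq_abs, abs_of_nonpos (by nlinarith [norm_nonneg a])]
  ring

lemma mob_differentiableOn (a : ℂ) (ha : ‖a‖ < 1) :
    DifferentiableOn ℂ (mob a) (ball (0:ℂ) 1) := fun z hz =>
  ((mob_hasDerivAt a z (den_ne a z ha (mem_ball_zero_iff.1 hz))).differentiableAt).differentiableWithinAt

/-- Schwarz–Pick, distance version from 0 : `‖mob (h 0) (h w)‖ ≤ ‖w‖`. -/
lemma schwarz_pick_dist (h : ℂ → ℂ) (hd : DifferentiableOn ℂ h (ball (0:ℂ) 1))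
    (hm : MapsTo h (ball (0:ℂ) 1) (ball (0:ℂ) 1)) (w : ℂ) (hw : ‖w‖ < 1) :
    ‖mob (h 0) (h w)‖ ≤ ‖w‖ := by
  have h0 : h 0 ∈ ball (0:ℂ) 1 := hm (mem_ball_zero_iff.2 (by norm_num))
  have h0' : ‖h 0‖ < 1 := mem_ball_zero_iff.1 h0
  set G := fun z => mob (h 0) (h z) with hG
  have hGd : DifferentiableOn ℂ G (ball (0:ℂ) 1) :=
    (mob_differentiableOn (h 0) h0').comp hd hm
  have hGm : MapsTo G (ball (0:ℂ) 1) (ball (0:ℂ) 1) :=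
    (mob_mapsTo (h 0) h0').comp hm
  have hG0 : G 0 = 0 := mob_self (h 0) h0'
  have := dist_le_dist_of_mapsTo_ball hGd (by rw [hG0]; exact hGm.mono_right ball_subset_closedBall) (mem_ball_zero_iff.2 hw)
  simpa [dist_eq_norm, hG0] using this

/-- Schwarz–Pick, derivative version. -/
lemma schwarz_pick_deriv (h : ℂ → ℂ) (hd : DifferentiableOn ℂ h (ball (0:ℂ) 1))
    (hm : MapsTo h (ball (0:ℂ) 1) (ball (0:ℂ) 1)) (w : ℂ) (hw : ‖w‖ < 1) :
    (1 - ‖w‖ ^ 2) * ‖deriv h w‖ ≤ 1 - ‖h w‖ ^ 2 := by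
  have hwb : w ∈ ball (0:ℂ) 1 := mem_ball_zero_iff.2 hw
  have hb : ‖h w‖ < 1 := mem_ball_zero_iff.1 (hm hwb)
  set b := h w with hbdef
  -- inner map
  have hmw0 : (1 : ℂ) - (starRingEnd ℂ) w * 0 ≠ 0 := by simp
  have hinner : HasDerivAt (mob w) (((starRingEnd ℂ) w * w - 1) / (1 - (starRingEnd ℂ) w * 0) ^ 2) 0 :=
    mob_hasDerivAt w 0 hmw0
  have hmw0' : mob w 0 = w := mob_zero w
  have hh : HasDerivAt h (deriv h w) w :=
    (hd.differentiableAt (isOpen_ball.mem_nhds hwb)).hasDerivAt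
  have hdenb : 1 - (starRingEnd ℂ) b * b ≠ 0 := den_ne b b hb hb
  have houter : HasDerivAt (mob b) (((starRingEnd ℂ) b * b - 1) / (1 - (starRingEnd ℂ) b * b) ^ 2) b :=
    mob_hasDerivAt b b hdenb
  set dinner := ((starRingEnd ℂ) w * w - 1) / (1 - (starRingEnd ℂ) w * 0) ^ 2 with hdin
  set douter := ((starRingEnd ℂ) b * b - 1) / (1 - (starRingEnd ℂ) b * b) ^ 2 with hdout
  have hh2 : HasDerivAt h (deriv h w) (mob w 0) := by rw [hmw0']; exact hh
  have hcomp1 : HasDerivAt (h ∘ mob w) (deriv h w * dinner) 0 := hh2.comp 0 hinner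
  have hb2 : HasDerivAt (mob b) douter ((h ∘ mob w) 0) := by
    have : (h ∘ mob w) 0 = b := by simp [Function.comp, hmw0', hbdef]
    rw [this]; exact houter
  have hcomp2 : HasDerivAt (mob b ∘ (h ∘ mob w)) (douter * (deriv h w * dinner)) 0 :=
    hb2.comp 0 hcomp1
  set G := mob b ∘ (h ∘ mob w) with hGdef
  have hG0 : G 0 = 0 := by
    simp only [hGdef, Function.comp_apply, hmw0']
    exact mob_self b hb
  have hGd : DifferentiableOn ℂ G (ball (0:ℂ) 1) :=
    ((mob_differentiableOn b hb).comp (hd.comp (mob_differentiableOn w hw) (mob_mapsTo w hw))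
      (hm.comp (mob_mapsTo w hw)))
  have hGm : MapsTo G (ball (0:ℂ) 1) (ball (0:ℂ) 1) :=
    (mob_mapsTo b hb).comp (hm.comp (mob_mapsTo w hw))
  have hle : ‖deriv G 0‖ ≤ 1 := by
    have := norm_deriv_le_div_of_mapsTo_ball hGd (by rw [hG0]; exact hGm.mono_right ball_subset_closedBall) one_pos
    simpa using this
  rw [hcomp2.deriv] at hle
  have e1 : ‖douter‖ = 1 / (1 - ‖b‖ ^ 2) := by
    rw [hdout, mob_deriv_norm b b hb hdenb, one_sub_conj_self_norm b hb]
    have h0 : (1:ℝ) - ‖b‖ ^ 2 ≠ 0 := by nlinarith [norm_nonneg b]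
    rw [pow_two ((1:ℝ) - ‖b‖ ^ 2), div_mul_eq_div_div, div_self h0]
  have e2 : ‖dinner‖ = 1 - ‖w‖ ^ 2 := by
    rw [hdin, mob_deriv_norm w 0 hw hmw0]
    simp
  rw [norm_mul, norm_mul, e1, e2] at hle
  have hbpos : (0:ℝ) < 1 - ‖b‖ ^ 2 := by nlinarith [norm_nonneg b]
  rw [div_mul_eq_mul_div, one_mul, div_le_one hbpos] at hle
  linarith [hle]


/-- Lower bound for the pseudo-hyperbolic distance. -/
lemma mob_norm_lower (a u : ℂ) (ha : ‖a‖ < 1) (hu : ‖u‖ < 1) :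
    |‖a‖ - ‖u‖| ≤ ‖mob a u‖ * (1 - ‖a‖ * ‖u‖) := by
  have ha0 := norm_nonneg a
  have hu0 := norm_nonneg u
  have hx : 0 < 1 - ‖a‖ * ‖u‖ := by nlinarith
  have hden : ‖1 - (starRingEnd ℂ) a * u‖ ≥ 1 - ‖a‖ * ‖u‖ := by
    calc ‖1 - (starRingEnd ℂ) a * u‖ ≥ ‖(1:ℂ)‖ - ‖(starRingEnd ℂ) a * u‖ :=
          norm_sub_norm_le _ _
      _ = 1 - ‖a‖ * ‖u‖ := by rw [norm_one, norm_mul, RCLike.norm_conj]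
  have hid := mob_identity a u ha hu
  have hdpos := den_norm_pos a u ha hu
  have hM0 := norm_nonneg (mob a u)
  have hM1 := mob_norm_lt a u ha hu
  -- 1 - M^2 ≤ (1-‖a‖²)(1-‖u‖²)/(1-‖a‖‖u‖)²
  have hkey : (1 - ‖mob a u‖ ^ 2) * (1 - ‖a‖ * ‖u‖) ^ 2 ≤ (1 - ‖a‖ ^ 2) * (1 - ‖u‖ ^ 2) := by
    rw [hid, div_mul_eq_mul_div]
    rw [div_le_iff₀ (by positivity)]
    have p1 : (0:ℝ) < 1 - ‖a‖ ^ 2 := by nlinarith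
    have p2 : (0:ℝ) < 1 - ‖u‖ ^ 2 := by nlinarith
    have hnum : (0:ℝ) ≤ (1 - ‖a‖ ^ 2) * (1 - ‖u‖ ^ 2) := (mul_pos p1 p2).le
    have h2 : (1 - ‖a‖ * ‖u‖) ^ 2 ≤ ‖1 - (starRingEnd ℂ) a * u‖ ^ 2 := by nlinarith
    nlinarith [mul_le_mul_of_nonneg_left h2 hnum]
  -- hence M²(1-x)² ≥ (‖a‖-‖u‖)²
  have hsq : (‖a‖ - ‖u‖) ^ 2 ≤ (‖mob a u‖ * (1 - ‖a‖ * ‖u‖)) ^ 2 := by nlinarith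
  have hMx : 0 ≤ ‖mob a u‖ * (1 - ‖a‖ * ‖u‖) := by positivity
  rw [abs_le]
  constructor
  · nlinarith
  · nlinarith


lemma one_sub_sq_pos (x : ℝ) (h0 : 0 ≤ x) (h1 : x < 1) : 0 < 1 - x ^ 2 := by nlinarith

lemma arith1 (s m ρ M : ℝ) (habs : |s - m| ≤ M * (1 - s * m)) (hM : M ≤ ρ)
    (hsm : 0 ≤ 1 - s * m) : s - ρ ≤ m * (1 - s * ρ) := by
  have h3 : s - m ≤ |s - m| := le_abs_self _
  have h5 : M * (1 - s * m) ≤ ρ * (1 - s * m) := mul_le_mul_of_nonneg_right hM hsm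
  nlinarith

lemma arith2 (s ρ : ℝ) (h0 : 0 ≤ s) (h1 : s ≤ 1) (hρ0 : 0 < ρ) :
    s - ρ ≤ s * (1 - s * ρ) := by
  nlinarith [mul_nonneg hρ0.le (mul_nonneg (sub_nonneg.2 h1) (by linarith : (0:ℝ) ≤ 1 + s))]

lemma arith3 (s ρ m₀ m : ℝ) (hmlow : s - ρ ≤ m * (1 - s * ρ)) (hsm : 0 < 1 - s * ρ)
    (hcon : m₀ + ρ < s * (1 + m₀ * ρ)) : m₀ < m := by nlinarith

lemma arith4 (c β u F : ℝ) (hc0 : 0 < c) (hc1 : c < 1) (hβ0 : 0 ≤ β) (hβc : β < c)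
    (hu0 : 0 ≤ u) (hu1 : u < 1) (h2c : 2 * c < u * (1 + c ^ 2))
    (habs : |β - u| ≤ F * (1 - β * u)) (hF0 : 0 ≤ F) : c ≤ F := by
  have h3 : u - β ≤ |β - u| := by rw [abs_sub_comm]; exact le_abs_self _
  have h4 : 0 < 1 - β * u := by nlinarith
  have h5 : c + β < u * (1 + c * β) := by nlinarith [mul_pos (sub_pos.2 hβc) (mul_pos (sub_pos.2 hc1) (by linarith : (0:ℝ) < 1 + c))]
  have h6 : c * (1 - β * u) < u - β := by linarith
  nlinarith

lemma arith6 (E ρ m₀ m : ℝ) (hF : E + ρ < m₀ * (1 + E * ρ)) (hmm : m₀ < m)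
    (hpos : 0 < 1 + E * ρ) : E + ρ < m * (1 + E * ρ) :=
  lt_of_lt_of_le hF (mul_le_mul_of_nonneg_right hmm.le hpos.le)

lemma arith5 (E ρ m Q hyp d : ℝ) (hρ0 : 0 < ρ) (hρ1 : ρ < 1) (hm0 : 0 ≤ m) (hm1 : m ≤ 1)
    (hd0 : 0 ≤ d) (hE0 : 0 ≤ E)
    (heq : hyp * (1 - ρ ^ 2 * m ^ 2) = (1 - ρ ^ 2) * Q)
    (hle : hyp ≤ E) (hQlow : m - ρ * d ≤ Q) (hdle : d * (1 - ρ ^ 2) ≤ 1 - m ^ 2)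
    (h3 : E + ρ < m * (1 + E * ρ)) : False := by
  have hρ2 : 0 < 1 - ρ ^ 2 := one_sub_sq_pos ρ hρ0.le hρ1
  have hU : 0 < 1 - ρ ^ 2 * m ^ 2 := by
    have hm2 : m ^ 2 ≤ 1 := by nlinarith
    have := mul_le_of_le_one_right (sq_nonneg ρ) hm2
    linarith
  have h1 : (1 - ρ ^ 2) * Q ≤ E * (1 - ρ ^ 2 * m ^ 2) := by
    rw [← heq]; exact mul_le_mul_of_nonneg_right hle hU.le
  have h2 : (1 - ρ ^ 2) * m - ρ * (1 - m ^ 2) ≤ (1 - ρ ^ 2) * Q := by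
    nlinarith [mul_le_mul_of_nonneg_left hQlow hρ2.le]
  have h4 : (0:ℝ) < 1 + ρ * m := by nlinarith
  nlinarith [mul_pos (show (0:ℝ) < m - ρ - E * (1 - ρ * m) by nlinarith) h4]


lemma main_pt (f : ℂ → ℂ) (hf : DifferentiableOn ℂ f (ball (0:ℂ) 1))
    (hmap : ∀ z ∈ ball (0:ℂ) 1, f z ∈ ball (0:ℂ) 1)
    (c E ρ m₀ : ℝ)
    (hc0 : 0 < c) (hc1 : c < 1)
    (hE0 : 0 ≤ E) (hE1 : E < 1)
    (hρ0 : 0 < ρ) (hρ1 : ρ < 1)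
    (hm0 : 0 < m₀) (hm1 : m₀ < 1)
    (harc : 2 * c ≤ ρ * m₀ * (1 + c ^ 2))
    (hF : E + ρ < m₀ * (1 + E * ρ))
    (hbd : ∀ z ∈ ball (0:ℂ) 1, c ≤ ‖f z‖ → hypDeriv f z ≤ E)
    (z₀ : ℂ) (hz₀ : z₀ ∈ ball (0:ℂ) 1) (hfz₀ : ‖f z₀‖ < c) :
    hypDeriv f z₀ ≤ (m₀ + ρ) / (1 + m₀ * ρ) := by
  by_contra hcon
  push_neg at hcon
  have hz₀n : ‖z₀‖ < 1 := mem_ball_zero_iff.1 hz₀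
  set b := f z₀ with hb
  have hbn : ‖b‖ < 1 := mem_ball_zero_iff.1 (hmap z₀ hz₀)
  have hbc : ‖b‖ < c := hfz₀
  set g : ℂ → ℂ := mob b ∘ f ∘ mob z₀ with hgdef
  have hmaps' : MapsTo f (ball (0:ℂ) 1) (ball (0:ℂ) 1) := fun z hz => hmap z hz
  have hgd : DifferentiableOn ℂ g (ball (0:ℂ) 1) :=
    (mob_differentiableOn b hbn).comp
      (hf.comp (mob_differentiableOn z₀ hz₀n) (mob_mapsTo z₀ hz₀n))
      (hmaps'.comp (mob_mapsTo z₀ hz₀n))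
  have hgm : MapsTo g (ball (0:ℂ) 1) (ball (0:ℂ) 1) :=
    (mob_mapsTo b hbn).comp (hmaps'.comp (mob_mapsTo z₀ hz₀n))
  have hg0 : g 0 = 0 := by
    simp only [hgdef, Function.comp_apply, mob_zero, ← hb]
    exact mob_self b hbn
  -- chain rule at 0 : ‖deriv g 0‖ = hypDeriv f z₀
  have hden00 : (1:ℂ) - (starRingEnd ℂ) z₀ * 0 ≠ 0 := by simp
  have hin0 : HasDerivAt (mob z₀)
      (((starRingEnd ℂ) z₀ * z₀ - 1) / (1 - (starRingEnd ℂ) z₀ * 0) ^ 2) 0 :=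
    mob_hasDerivAt z₀ 0 hden00
  have hf0 : HasDerivAt f (deriv f z₀) (mob z₀ 0) := by
    rw [mob_zero]
    exact (hf.differentiableAt (isOpen_ball.mem_nhds hz₀)).hasDerivAt
  have hcomp1 : HasDerivAt (f ∘ mob z₀)
      (deriv f z₀ * (((starRingEnd ℂ) z₀ * z₀ - 1) / (1 - (starRingEnd ℂ) z₀ * 0) ^ 2)) 0 :=
    hf0.comp 0 hin0
  have hdenbb : (1:ℂ) - (starRingEnd ℂ) b * b ≠ 0 := den_ne b b hbn hbn
  have hout0 : HasDerivAt (mob b)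
      (((starRingEnd ℂ) b * b - 1) / (1 - (starRingEnd ℂ) b * b) ^ 2) ((f ∘ mob z₀) 0) := by
    have : (f ∘ mob z₀) 0 = b := by simp [Function.comp_apply, mob_zero, ← hb]
    rw [this]
    exact mob_hasDerivAt b b hdenbb
  have hgder : HasDerivAt g
      ((((starRingEnd ℂ) b * b - 1) / (1 - (starRingEnd ℂ) b * b) ^ 2) *
        (deriv f z₀ * (((starRingEnd ℂ) z₀ * z₀ - 1) / (1 - (starRingEnd ℂ) z₀ * 0) ^ 2))) 0 :=
    hout0.comp 0 hcomp1
  have hb2pos : (0:ℝ) < 1 - ‖b‖ ^ 2 := one_sub_sq_pos ‖b‖ (norm_nonneg b) hbn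
  have hsval : ‖deriv g 0‖ = hypDeriv f z₀ := by
    rw [hgder.deriv, norm_mul, norm_mul,
      mob_deriv_norm b b hbn hdenbb, one_sub_conj_self_norm b hbn,
      mob_deriv_norm z₀ 0 hz₀n hden00]
    simp only [mul_zero, sub_zero, norm_one, one_pow]
    rw [hypDeriv, ← hb]
    rw [pow_two ((1:ℝ) - ‖b‖ ^ 2), div_mul_eq_div_div, div_self hb2pos.ne', div_one]
    ring
  -- the quotient ψ
  set ψ := dslope g 0 with hψ
  have h0ball : (0:ℂ) ∈ ball (0:ℂ) 1 := mem_ball_self one_pos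
  have hψd : DifferentiableOn ℂ ψ (ball (0:ℂ) 1) :=
    (differentiableOn_dslope (isOpen_ball.mem_nhds h0ball)).2 hgd
  have hψle : ∀ u ∈ ball (0:ℂ) 1, ‖ψ u‖ ≤ 1 := fun u hu => by
    have := norm_dslope_le_div_of_mapsTo_ball hgd (by rw [hg0]; exact hgm.mono_right ball_subset_closedBall) hu
    simpa using this
  have hψ0 : ψ 0 = deriv g 0 := dslope_same g 0
  set s := hypDeriv f z₀ with hsdef
  have hs0n : ‖ψ 0‖ = s := by rw [hψ0, hsval]
  have hs1 : s ≤ 1 := by rw [← hs0n]; exact hψle 0 h0ball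
  have hsnn : 0 ≤ s := by rw [← hs0n]; exact norm_nonneg _
  have hD'pos : (0:ℝ) < (m₀ + ρ) / (1 + m₀ * ρ) := by positivity
  have hspos : 0 < s := lt_trans hD'pos hcon
  -- the point w
  set w : ℂ := ((ρ : ℝ) : ℂ) with hwdef
  have hwn : ‖w‖ = ρ := by
    rw [hwdef, Complex.norm_real, Real.norm_eq_abs, abs_of_pos hρ0]
  have hwb : w ∈ ball (0:ℂ) 1 := mem_ball_zero_iff.2 (by rw [hwn]; exact hρ1)
  set m := ‖ψ w‖ with hmdef
  have hmle1 : m ≤ 1 := hψle w hwb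
  have hmnn : 0 ≤ m := norm_nonneg _
  have hgfun : g = fun u => u * ψ u := by
    funext u
    have h := sub_smul_dslope g 0 u
    simp only [sub_zero, hg0, smul_eq_mul] at h
    rw [← hψ] at h
    exact h.symm
  have hgw : g w = w * ψ w := by rw [hgfun]
  have hψw : HasDerivAt ψ (deriv ψ w) w :=
    (hψd.differentiableAt (isOpen_ball.mem_nhds hwb)).hasDerivAt
  have hgw' : HasDerivAt g (ψ w + w * deriv ψ w) w := by
    rw [hgfun]
    have := (hasDerivAt_id w).mul hψw
    exact this.congr_deriv (by simp)
  -- the two Schwarz–Pick facts about ψ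
  have hfacts : (s - ρ) ≤ m * (1 - s * ρ) ∧ ‖deriv ψ w‖ * (1 - ρ ^ 2) ≤ 1 - m ^ 2 := by
    by_cases hsub : ∀ u ∈ ball (0:ℂ) 1, ‖ψ u‖ < 1
    · have hψm : MapsTo ψ (ball (0:ℂ) 1) (ball (0:ℂ) 1) := fun u hu =>
        mem_ball_zero_iff.2 (hsub u hu)
      constructor
      · have h1 := schwarz_pick_dist ψ hψd hψm w (by rw [hwn]; exact hρ1)
        rw [hwn] at h1
        have h2 := mob_norm_lower (ψ 0) (ψ w) (hsub 0 h0ball) (hsub w hwb)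
        rw [hs0n, ← hmdef] at h2
        have h4 : 0 ≤ 1 - s * m := sub_nonneg.2 (mul_le_one₀ hs1 hmnn hmle1)
        exact arith1 s m ρ _ h2 h1 h4
      · have h6 := schwarz_pick_deriv ψ hψd hψm w (by rw [hwn]; exact hρ1)
        rw [hwn, ← hmdef] at h6
        linarith
    · push_neg at hsub
      obtain ⟨u₁, hu₁b, hu₁⟩ := hsub
      have hmax : IsMaxOn (norm ∘ ψ) (ball (0:ℂ) 1) u₁ := fun u hu =>
        le_trans (hψle u hu) hu₁
      have hEq := Complex.eqOn_of_isPreconnected_of_isMaxOn_norm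
        (convex_ball (0:ℂ) 1).isPreconnected isOpen_ball hψd hu₁b hmax
      have hms : m = s := by
        rw [hmdef, hEq hwb, ← hs0n, hEq h0ball]
        rfl
      constructor
      · rw [hms]
        exact arith2 s ρ hsnn hs1 hρ0
      · have hd0 : deriv ψ w = 0 := by
          have hev : ψ =ᶠ[nhds w] fun _ => ψ u₁ :=
            Filter.eventuallyEq_of_mem (isOpen_ball.mem_nhds hwb) hEq
          rw [hev.deriv_eq, deriv_const]
        rw [hd0]
        simp only [norm_zero, zero_mul]
        have hm2 : m ^ 2 ≤ 1 := by rw [sq]; exact mul_le_one₀ hmle1 hmnn hmle1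
        linarith
  obtain ⟨hmlow, hdψ⟩ := hfacts
  have hsm : 0 < 1 - s * ρ :=
    sub_pos.2 (lt_of_le_of_lt (mul_le_of_le_one_left hρ0.le hs1) hρ1)
  have hmm₀ : m₀ < m := by
    rw [div_lt_iff₀ (by positivity)] at hcon
    exact arith3 s ρ m₀ m hmlow hsm hcon
  -- the point z₁
  set z₁ := mob z₀ w with hz₁def
  have hz₁b : z₁ ∈ ball (0:ℂ) 1 := mob_mapsTo z₀ hz₀n hwb
  have hz₁n : ‖z₁‖ < 1 := mem_ball_zero_iff.1 hz₁b
  have hfz₁ : ‖f z₁‖ < 1 := mem_ball_zero_iff.1 (hmap z₁ hz₁b)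
  have hgwval : g w = mob b (f z₁) := rfl
  have hfz₁' : f z₁ = mob b (g w) := by rw [hgwval, mob_mob b (f z₁) hbn hfz₁]
  have hgwn : ‖g w‖ = ρ * m := by rw [hgw, norm_mul, hwn, hmdef]
  have hgwlt : ‖g w‖ < 1 := mem_ball_zero_iff.1 (hgm hwb)
  have hρm1 : ρ * m < 1 := by rw [← hgwn]; exact hgwlt
  -- ‖f z₁‖ ≥ c
  have hc' : c ≤ ‖f z₁‖ := by
    have h2 := mob_norm_lower b (g w) hbn hgwlt
    rw [← hfz₁', hgwn] at h2
    have h2c : 2 * c < (ρ * m) * (1 + c ^ 2) := by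
      have ha1 : ρ * m₀ < ρ * m := mul_lt_mul_of_pos_left hmm₀ hρ0
      have ha2 : ρ * m₀ * (1 + c ^ 2) < ρ * m * (1 + c ^ 2) :=
        mul_lt_mul_of_pos_right ha1 (by positivity)
      linarith
    exact arith4 c ‖b‖ (ρ * m) ‖f z₁‖ hc0 hc1 (norm_nonneg b) hbc
      (by positivity) hρm1 h2c h2 (norm_nonneg _)
  have hbE := hbd z₁ hz₁b hc'
  -- derivative identity at w (invariance)
  have hdzw : (1:ℂ) - (starRingEnd ℂ) z₀ * w ≠ 0 :=
    den_ne z₀ w hz₀n (by rw [hwn]; exact hρ1)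
  have hinw : HasDerivAt (mob z₀)
      (((starRingEnd ℂ) z₀ * z₀ - 1) / (1 - (starRingEnd ℂ) z₀ * w) ^ 2) w :=
    mob_hasDerivAt z₀ w hdzw
  have hfw : HasDerivAt f (deriv f z₁) (mob z₀ w) :=
    (hf.differentiableAt (isOpen_ball.mem_nhds hz₁b)).hasDerivAt
  have hlhs : HasDerivAt (f ∘ mob z₀)
      (deriv f z₁ * (((starRingEnd ℂ) z₀ * z₀ - 1) / (1 - (starRingEnd ℂ) z₀ * w) ^ 2)) w :=
    hfw.comp w hinw
  have hdenbw : (1:ℂ) - (starRingEnd ℂ) b * g w ≠ 0 := den_ne b (g w) hbn hgwlt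
  have hrhs : HasDerivAt (mob b ∘ g)
      ((((starRingEnd ℂ) b * b - 1) / (1 - (starRingEnd ℂ) b * g w) ^ 2) *
        (ψ w + w * deriv ψ w)) w :=
    (mob_hasDerivAt b (g w) hdenbw).comp w hgw'
  have hEqOn : Set.EqOn (f ∘ mob z₀) (mob b ∘ g) (ball (0:ℂ) 1) := fun u hu => by
    have hfu : ‖f (mob z₀ u)‖ < 1 :=
      mem_ball_zero_iff.1 (hmap _ (mob_mapsTo z₀ hz₀n hu))
    simp only [Function.comp_apply, hgdef]
    exact (mob_mob b (f (mob z₀ u)) hbn hfu).symm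
  have hlhs' : HasDerivAt (f ∘ mob z₀)
      ((((starRingEnd ℂ) b * b - 1) / (1 - (starRingEnd ℂ) b * g w) ^ 2) *
        (ψ w + w * deriv ψ w)) w :=
    hrhs.congr_of_eventuallyEq (Filter.eventuallyEq_of_mem (isOpen_ball.mem_nhds hwb) hEqOn)
  have hderiv_eq := hlhs.unique hlhs'
  -- norms
  set A := ‖(1:ℂ) - (starRingEnd ℂ) z₀ * w‖ ^ 2 with hA
  set B := ‖(1:ℂ) - (starRingEnd ℂ) b * g w‖ ^ 2 with hB
  set X := 1 - ‖z₀‖ ^ 2 with hX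
  set Y := 1 - ‖b‖ ^ 2 with hY
  set P := ‖deriv f z₁‖ with hP
  set Q := ‖ψ w + w * deriv ψ w‖ with hQ
  set U := 1 - ‖g w‖ ^ 2 with hUdef
  clear_value A B X Y P Q U
  have hwn1 : ‖w‖ < 1 := by rw [hwn]; exact hρ1
  have hApos : 0 < A := by rw [hA]; exact pow_pos (den_norm_pos z₀ w hz₀n hwn1) 2
  have hBpos : 0 < B := by rw [hB]; exact pow_pos (den_norm_pos b (g w) hbn hgwlt) 2
  have hXpos : 0 < X := by rw [hX]; exact one_sub_sq_pos ‖z₀‖ (norm_nonneg z₀) hz₀n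
  have hYpos : 0 < Y := hb2pos
  have hUpos : 0 < U := by
    rw [hUdef]; exact one_sub_sq_pos ‖g w‖ (norm_nonneg (g w)) hgwlt
  have hnormeq : P * (X / A) = (Y / B) * Q := by
    have h := congrArg norm hderiv_eq
    rwa [norm_mul, norm_mul, mob_deriv_norm z₀ w hz₀n hdzw,
      mob_deriv_norm b (g w) hbn hdenbw, ← hA, ← hB, ← hX, ← hY, ← hP, ← hQ] at h
  -- identities for the hyperbolic quantities at z₁
  have hz₁id : 1 - ‖z₁‖ ^ 2 = X * (1 - ρ ^ 2) / A := by
    rw [hz₁def]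
    have := mob_identity z₀ w hz₀n hwn1
    rw [hwn] at this
    rw [this, ← hA, ← hX]
  have hfz₁id : 1 - ‖f z₁‖ ^ 2 = Y * U / B := by
    rw [hfz₁']
    have := mob_identity b (g w) hbn hgwlt
    rw [this, ← hB, ← hY, ← hUdef]
  -- hypDeriv f z₁ * (1 - ‖g w‖²) = (1-ρ²) * Q
  have hρ2 : 0 < 1 - ρ ^ 2 := one_sub_sq_pos ρ hρ0.le hρ1
  have hPval : P = Y * A * Q / (B * X) := by
    rw [eq_div_iff (mul_pos hBpos hXpos).ne']
    field_simp [hApos.ne', hBpos.ne'] at hnormeq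
    linear_combination hnormeq
  have hhyp : hypDeriv f z₁ * U = (1 - ρ ^ 2) * Q := by
    rw [hypDeriv, hz₁id, hfz₁id, ← hP, hPval]
    field_simp [hApos.ne', hBpos.ne', hXpos.ne', hYpos.ne', hUpos.ne']
  -- lower bound for Q
  have hQlow : m - ρ * ‖deriv ψ w‖ ≤ Q := by
    have h := norm_add_le (ψ w + w * deriv ψ w) (-(w * deriv ψ w))
    simp only [add_neg_cancel_right] at h
    rw [norm_neg, norm_mul, hwn, ← hQ] at h
    linarith
  have hUgw : U = 1 - ρ ^ 2 * m ^ 2 := by rw [hUdef, hgwn]; ring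
  have heq : hypDeriv f z₁ * (1 - ρ ^ 2 * m ^ 2) = (1 - ρ ^ 2) * Q := by
    rw [← hUgw]; exact hhyp
  have h3 : E + ρ < m * (1 + E * ρ) := arith6 E ρ m₀ m hF hmm₀ (by positivity)
  exact arith5 E ρ m Q (hypDeriv f z₁) ‖deriv ψ w‖ hρ0 hρ1 hmnn hmle1
    (norm_nonneg _) hE0 heq hbE hQlow hdψ h3


end SP5

/-- Lemma: it suffices to bound the hyperbolic derivative where `|f| ≥ c`. -/
theorem statement5
    (f : ℂ → ℂ) (hf : DifferentiableOn ℂ f (ball (0 : ℂ) 1))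
    (hmap : ∀ z ∈ ball (0 : ℂ) 1, f z ∈ ball (0 : ℂ) 1)
    (c : ℝ) (hc : c ∈ Ioo (0 : ℝ) 1)
    (h : ∃ D < (1 : ℝ), ∀ z ∈ ball (0 : ℂ) 1, c ≤ ‖f z‖ → hypDeriv f z ≤ D) :
    ContractiveMap f := by
  obtain ⟨D, hD1, hDbd⟩ := h
  obtain ⟨hc0, hc1⟩ := hc
  set E := max D 0 with hE
  have hE1 : E < 1 := max_lt hD1 one_pos
  have hE0 : 0 ≤ E := le_max_right _ _
  have hbd : ∀ z ∈ ball (0:ℂ) 1, c ≤ ‖f z‖ → hypDeriv f z ≤ E := fun z hz hcz =>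
    (hDbd z hz hcz).trans (le_max_left _ _)
  set c₁ := 2 * c / (1 + c ^ 2) with hc₁
  have hc₁0 : 0 < c₁ := by positivity
  have hc₁1 : c₁ < 1 := by
    rw [hc₁, div_lt_one (by positivity)]
    linarith [mul_pos (sub_pos.2 hc1) (sub_pos.2 hc1)]
  set ρ := (1 + c₁) / 2 with hρ
  have hρ0 : 0 < ρ := by rw [hρ]; linarith
  have hρ1 : ρ < 1 := by rw [hρ]; linarith
  have hc₁ρ : c₁ < ρ := by rw [hρ]; linarith
  set μ := max (c₁ / ρ) ((E + ρ) / (1 + E * ρ)) with hμ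
  have hEρpos : (0:ℝ) < 1 + E * ρ := by positivity
  have hμ1 : μ < 1 := by
    apply max_lt
    · rw [div_lt_one hρ0]; exact hc₁ρ
    · rw [div_lt_one hEρpos]
      linarith [mul_pos (sub_pos.2 hE1) (sub_pos.2 hρ1)]
  have hμ0 : 0 ≤ μ := le_trans (by positivity) (le_max_left _ _)
  set m₀ := (1 + μ) / 2 with hm₀
  have hm₀0 : 0 < m₀ := by rw [hm₀]; linarith
  have hm₀1 : m₀ < 1 := by rw [hm₀]; linarith
  have hμm₀ : μ < m₀ := by rw [hm₀]; linarith
  have harc : 2 * c ≤ ρ * m₀ * (1 + c ^ 2) := by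
    have h1 : c₁ / ρ ≤ μ := le_max_left _ _
    have h2 : c₁ ≤ ρ * μ := by
      rw [div_le_iff₀ hρ0] at h1; linarith [h1]
    have h3 : c₁ * (1 + c ^ 2) = 2 * c := by
      rw [hc₁]; field_simp
    linarith [mul_le_mul_of_nonneg_right h2 (by positivity : (0:ℝ) ≤ 1 + c ^ 2),
      mul_lt_mul_of_pos_right (mul_lt_mul_of_pos_left hμm₀ hρ0)
        (by positivity : (0:ℝ) < 1 + c ^ 2), h3]
  have hF : E + ρ < m₀ * (1 + E * ρ) := by
    have h1 : (E + ρ) / (1 + E * ρ) ≤ μ := le_max_right _ _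
    rw [div_le_iff₀ hEρpos] at h1
    linarith [mul_lt_mul_of_pos_right hμm₀ hEρpos, h1]
  set D' := (m₀ + ρ) / (1 + m₀ * ρ) with hD'
  have hD'1 : D' < 1 := by
    rw [hD', div_lt_one (by positivity)]
    linarith [mul_pos (sub_pos.2 hm₀1) (sub_pos.2 hρ1)]
  refine ⟨max E D', max_lt hE1 hD'1, fun z hz => ?_⟩
  by_cases hcz : c ≤ ‖f z‖
  · exact (hbd z hz hcz).trans (le_max_left _ _)
  · push_neg at hcz
    exact (SP5.main_pt f hf hmap c E ρ m₀ hc0 hc1 hE0 hE1 hρ0 hρ1 hm₀0 hm₀1 harc hF hbd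
      z hz hcz).trans (le_max_right _ _)


end
end

section
/- Let σ be a finite positive Borel measure on ∂𝔻 with Poisson integral u(z) = ∫_{∂𝔻} (1−|z|²)/|ξ−z|² dσ(ξ). Suppose there exists c > 0 such that σ(I) ≥ c·|I|·u(z_I) for every arc I ⊂ ∂𝔻, where z_I = (1−|I|)ξ_I with ξ_I the center of I. Then σ is a doubling measure: there exists a constant C = C(c) > 0 such that σ(2I) ≤ C·σ(I) for every arc I ⊂ ∂𝔻, where 2I is the arc with the same center as I and twice its length. -/
open MeasureTheory Complex Set Metric Filter
open scoped ENNReal NNReal Topology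

noncomputable section

lemma norm_exp_mul_I_sub_one_le' (θ : ℝ) : ‖Complex.exp (θ * Complex.I) - 1‖ ≤ |θ| := by
  have h1 : ‖Complex.exp (θ * Complex.I) - 1‖ ^ 2 = 2 - 2 * Real.cos θ := by
    rw [Complex.sq_norm]
    simp [Complex.normSq_apply, Complex.sub_re, Complex.sub_im,
      Complex.exp_ofReal_mul_I_re, Complex.exp_ofReal_mul_I_im]
    nlinarith [Real.sin_sq_add_cos_sq θ]
  have h2 : 1 - θ ^ 2 / 2 ≤ Real.cos θ := Real.one_sub_sq_div_two_le_cos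
  nlinarith [norm_nonneg (Complex.exp (θ * Complex.I) - 1), abs_nonneg θ, _root_.sq_abs θ]

set_option maxHeartbeats 1000000 in
/-- Remark: condition (b) of Theorem 1 implies that `σ` is a doubling measure. -/
theorem statement13 (σ : Measure ℂ) [IsFiniteMeasure σ]
    (hsupp : σ (sphere (0 : ℂ) 1)ᶜ = 0)
    (c : ℝ) (hc : 0 < c)
    (hb : ∀ ξ : ℂ, ‖ξ‖ = 1 → ∀ t ∈ Ioc (0 : ℝ) 1,
      c * (t * poissonInt σ (((1 : ℝ) - t) * ξ)) ≤ (σ (bdryArc ξ t)).toReal) :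
    ∃ C > (0 : ℝ), ∀ ξ : ℂ, ‖ξ‖ = 1 → ∀ t ∈ Ioc (0 : ℝ) 1,
      σ (bdryArc ξ (min (2 * t) 1)) ≤ ENNReal.ofReal C * σ (bdryArc ξ t) := by
  have hπ : (0:ℝ) < Real.pi := Real.pi_pos
  set K : ℝ := (2 * Real.pi + 1) ^ 2 with hKdef
  have hK : 0 < K := by positivity
  refine ⟨K / c, by positivity, ?_⟩
  intro ξ hξ t ht
  obtain ⟨ht0, ht1⟩ := ht
  set s := min (2 * t) 1 with hs
  have hs2 : s ≤ 2 * t := min_le_left _ _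
  set z : ℂ := ((1 : ℝ) - t) * ξ with hz
  have hnz : ‖z‖ = 1 - t := by
    have hz' : z = (((1 - t : ℝ)) : ℂ) * ξ := by rw [hz]; push_cast; ring
    rw [hz', norm_mul, hξ, mul_one, Complex.norm_real, Real.norm_eq_abs,
      _root_.abs_of_nonneg (by linarith)]
  set g : ℂ → ℝ := fun η => (1 - ‖z‖ ^ 2) / ‖η - z‖ ^ 2 with hg
  have hnum : 1 - ‖z‖ ^ 2 = t * (2 - t) := by rw [hnz]; ring
  have hgnn : ∀ η, 0 ≤ g η := fun η =>
    div_nonneg (by rw [hnum]; nlinarith) (by positivity)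
  -- measurability of the arc
  have harc : bdryArc ξ s =
      (fun θ : ℝ => Complex.exp (θ * Complex.I) * ξ) '' Icc (-(Real.pi * s)) (Real.pi * s) := by
    ext η
    simp only [bdryArc, mem_setOf_eq, mem_image, mem_Icc, ← abs_le]
    constructor
    · rintro ⟨θ, h1, h2⟩; exact ⟨θ, h1, h2.symm⟩
    · rintro ⟨θ, h1, h2⟩; exact ⟨θ, h1, h2.symm⟩
  have hmeasArc : MeasurableSet (bdryArc ξ s) := by
    rw [harc]
    exact (isCompact_Icc.image
      ((Complex.continuous_exp.comp (Complex.continuous_ofReal.mul continuous_const)).mul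
        continuous_const)).measurableSet
  set A := bdryArc ξ s ∩ sphere (0:ℂ) 1 with hA
  have hAmeas : MeasurableSet A := hmeasArc.inter isClosed_sphere.measurableSet
  -- a.e. all points are on the sphere
  have hae : ∀ᵐ η ∂σ, ‖η‖ = 1 := by
    rw [ae_iff]
    refine measure_mono_null (fun η hη => ?_) hsupp
    simp only [mem_compl_iff, mem_sphere_iff_norm, sub_zero]
    exact hη
  -- upper bound for integrability
  have hub : ∀ᵐ η ∂σ, ‖g η‖ ≤ 2 / t := by
    filter_upwards [hae] with η hη
    rw [Real.norm_of_nonneg (hgnn η)]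
    have hd : t ≤ ‖η - z‖ := by
      have := norm_sub_norm_le η z
      rw [hη, hnz] at this
      linarith
    have hd2 : t ^ 2 ≤ ‖η - z‖ ^ 2 := by nlinarith [norm_nonneg (η - z)]
    have hgη : g η = t * (2 - t) / ‖η - z‖ ^ 2 := by simp only [hg]; rw [hnum]
    calc g η = t * (2 - t) / ‖η - z‖ ^ 2 := hgη
      _ ≤ (2 * t) / t ^ 2 := by
          apply div_le_div₀ (by positivity) (by nlinarith) (by positivity) hd2
      _ = 2 / t := by field_simp
  have hmeasg : AEStronglyMeasurable g σ := by
    apply Measurable.aestronglyMeasurable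
    exact measurable_const.div ((continuous_norm.comp (continuous_id.sub continuous_const)).pow 2).measurable
  have hint : Integrable g σ := (integrable_const (2 / t)).mono' hmeasg hub
  -- lower bound on A
  have hlow : ∀ η ∈ A, 1 / (K * t) ≤ g η := by
    rintro η ⟨⟨θ, hθ1, hθ2⟩, hηs⟩
    have hη1 : ‖η‖ = 1 := by simpa [mem_sphere_iff_norm] using hηs
    have hdlow : t ≤ ‖η - z‖ := by
      have := norm_sub_norm_le η z
      rw [hη1, hnz] at this
      linarith
    have hηz : ‖η - z‖ ≤ (2 * Real.pi + 1) * t := by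
      have : η - z = (Complex.exp (θ * Complex.I) - ((1 : ℝ) - t)) * ξ := by
        rw [hθ2, hz]; ring
      rw [this, norm_mul, hξ, mul_one]
      have h1 : ‖Complex.exp (θ * Complex.I) - ((1 : ℝ) - t)‖ ≤
          ‖Complex.exp (θ * Complex.I) - 1‖ + ‖(1 : ℂ) - ((1 : ℝ) - t)‖ := by
        have := norm_sub_le_norm_sub_add_norm_sub (Complex.exp (θ * Complex.I)) 1
          (((1 : ℝ) - t) : ℂ)
        exact this
      have h2 : ‖(1 : ℂ) - (((1 : ℝ) - t) : ℂ)‖ = t := by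
        have : (1 : ℂ) - (((1 : ℝ) - t) : ℂ) = (t : ℂ) := by push_cast; ring
        rw [this, Complex.norm_real, Real.norm_eq_abs, abs_of_pos ht0]
      have h3 : ‖Complex.exp (θ * Complex.I) - 1‖ ≤ |θ| := norm_exp_mul_I_sub_one_le' θ
      have h4 : |θ| ≤ Real.pi * s := hθ1
      have h5 : Real.pi * s ≤ 2 * Real.pi * t := by nlinarith
      calc ‖Complex.exp (θ * Complex.I) - ((1 : ℝ) - t)‖
          ≤ ‖Complex.exp (θ * Complex.I) - 1‖ + ‖(1 : ℂ) - (((1 : ℝ) - t) : ℂ)‖ := h1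
        _ ≤ 2 * Real.pi * t + t := by rw [h2]; linarith
        _ = (2 * Real.pi + 1) * t := by ring
    have hgη : g η = t * (2 - t) / ‖η - z‖ ^ 2 := by simp only [hg]; rw [hnum]
    have key : t / ((2 * Real.pi + 1) * t) ^ 2 ≤ g η := by
      rw [hgη]
      apply div_le_div₀ (by nlinarith) (by nlinarith) (by nlinarith) (by nlinarith)
    have e1 : ((2 * Real.pi + 1) * t) ^ 2 = K * t ^ 2 := by rw [hKdef]; ring
    have e2 : (1 : ℝ) / (K * t) = t / (K * t ^ 2) := by
      rw [div_eq_div_iff (by positivity) (by positivity)]; ring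
    calc 1 / (K * t) = t / ((2 * Real.pi + 1) * t) ^ 2 := by rw [e1, e2]
      _ ≤ g η := key
  -- chain of inequalities
  have h1 : 1 / (K * t) * (σ A).toReal ≤ ∫ η in A, g η ∂σ :=
    setIntegral_ge_of_const_le_real hAmeas (measure_ne_top σ A) hlow hint.integrableOn
  have h2 : ∫ η in A, g η ∂σ ≤ ∫ η, g η ∂σ :=
    setIntegral_le_integral hint (ae_of_all _ hgnn)
  have h3 : poissonInt σ z = ∫ η, g η ∂σ := rfl
  have h4 := hb ξ hξ t ⟨ht0, ht1⟩
  rw [← hz, h3] at h4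
  have h5 : c / K * (σ A).toReal ≤ (σ (bdryArc ξ t)).toReal := by
    have hct : (0:ℝ) ≤ c * t := by positivity
    have htne : t ≠ 0 := ne_of_gt ht0
    have hKne : K ≠ 0 := ne_of_gt hK
    have heq : c * t * (1 / (K * t)) = c / K := by
      field_simp
    calc c / K * (σ A).toReal = c * t * (1 / (K * t)) * (σ A).toReal := by rw [heq]
      _ = c * t * (1 / (K * t) * (σ A).toReal) := by ring
      _ ≤ c * t * (∫ η, g η ∂σ) := mul_le_mul_of_nonneg_left (h1.trans h2) hct
      _ = c * (t * ∫ η, g η ∂σ) := by ring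
      _ ≤ (σ (bdryArc ξ t)).toReal := h4
  have h6 : (σ A).toReal ≤ K / c * (σ (bdryArc ξ t)).toReal := by
    have h := mul_le_mul_of_nonneg_left h5 (le_of_lt (div_pos hK hc))
    have e : K / c * (c / K * (σ A).toReal) = (σ A).toReal := by
      rw [← mul_assoc, div_mul_div_comm, mul_comm K c, div_self (by positivity), one_mul]
    rw [e] at h
    exact h
  -- measure of full arc vs A
  have h7 : σ (bdryArc ξ s) ≤ σ A := by
    calc σ (bdryArc ξ s) ≤ σ (A ∪ (sphere (0:ℂ) 1)ᶜ) := by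
          apply measure_mono
          intro η hη
          by_cases h : η ∈ sphere (0:ℂ) 1
          · exact Or.inl ⟨hη, h⟩
          · exact Or.inr h
      _ ≤ σ A + σ (sphere (0:ℂ) 1)ᶜ := measure_union_le _ _
      _ = σ A := by rw [hsupp, add_zero]
  have h8 : (σ (bdryArc ξ s)).toReal ≤ K / c * (σ (bdryArc ξ t)).toReal :=
    le_trans (ENNReal.toReal_mono (measure_ne_top σ A) h7) h6
  calc σ (bdryArc ξ s) = ENNReal.ofReal (σ (bdryArc ξ s)).toReal :=
        (ENNReal.ofReal_toReal (measure_ne_top σ _)).symm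
    _ ≤ ENNReal.ofReal (K / c * (σ (bdryArc ξ t)).toReal) := ENNReal.ofReal_le_ofReal h8
    _ = ENNReal.ofReal (K / c) * ENNReal.ofReal (σ (bdryArc ξ t)).toReal := by
        rw [ENNReal.ofReal_mul (by positivity)]
    _ = ENNReal.ofReal (K / c) * σ (bdryArc ξ t) := by
        rw [ENNReal.ofReal_toReal (measure_ne_top σ _)]



end
end

section
/- Let σ be a finite positive Borel measure on ∂𝔻 with Poisson integral u(z) = ∫_{∂𝔻} (1−|z|²)/|ξ−z|² dσ(ξ), and let ε ∈ (0,1). If σ(2I) ≤ 2(1+ε)·σ(I) for every arc I ⊂ ∂𝔻, then there exists a constant c = c(ε) > 0 such that σ(I) ≥ c·|I|·u(z_I) for every arc I ⊂ ∂𝔻, where z_I = (1−|I|)ξ_I with ξ_I the center of I. -/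
open MeasureTheory Complex Set Metric Filter
open scoped ENNReal NNReal Topology

noncomputable section

private lemma arc14_norm {ξ : ℂ} (hξ : ‖ξ‖ = 1) {s : ℝ} {η : ℂ} (hη : η ∈ bdryArc ξ s) :
    ‖η‖ = 1 := by
  obtain ⟨θ, _, rfl⟩ := hη
  rw [norm_mul, Complex.norm_exp_ofReal_mul_I, one_mul, hξ]

private lemma arc14_meas (ξ : ℂ) (s : ℝ) : MeasurableSet (bdryArc ξ s) := by
  have h : bdryArc ξ s =
      (fun θ : ℝ => Complex.exp (θ * Complex.I) * ξ) '' Icc (-(Real.pi * s)) (Real.pi * s) := by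
    ext η
    simp only [bdryArc, mem_setOf_eq, mem_image, mem_Icc]
    constructor
    · rintro ⟨θ, hθ, rfl⟩; exact ⟨θ, abs_le.mp hθ, rfl⟩
    · rintro ⟨θ, hθ, rfl⟩; exact ⟨θ, abs_le.mpr hθ, rfl⟩
  rw [h]
  exact ((isCompact_Icc.image (by fun_prop)).isClosed).measurableSet

private lemma arc14_exists_arg {ξ η : ℂ} (hξ : ‖ξ‖ = 1) (hη : ‖η‖ = 1) :
    ∃ θ : ℝ, |θ| ≤ Real.pi ∧ η = Complex.exp (θ * Complex.I) * ξ := by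
  have hξ0 : ξ ≠ 0 := by intro h; rw [h, norm_zero] at hξ; norm_num at hξ
  set w : ℂ := η / ξ with hw
  have hw1 : ‖w‖ = 1 := by
    rw [hw, norm_div, hξ, hη, div_one]
  refine ⟨Complex.arg w, Complex.abs_arg_le_pi w, ?_⟩
  have h2 := Complex.norm_mul_exp_arg_mul_I w
  rw [hw1, Complex.ofReal_one, one_mul] at h2
  rw [h2, hw, div_mul_cancel₀ _ hξ0]

private lemma arc14_sphere {ξ : ℂ} (hξ : ‖ξ‖ = 1) : sphere (0 : ℂ) 1 ⊆ bdryArc ξ 1 := by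
  intro η hη
  have hη1 : ‖η‖ = 1 := by simpa using hη
  obtain ⟨θ, hθ, h⟩ := arc14_exists_arg hξ hη1
  exact ⟨θ, by simpa using hθ, h⟩

private lemma arc14_cos {θ : ℝ} (h : |θ| ≤ Real.pi) : θ ^ 2 / 8 ≤ 1 - Real.cos θ := by
  have hπ := Real.pi_pos
  have h4 := Real.pi_le_four
  have hs : 2 / Real.pi * (|θ| / 2) ≤ Real.sin (|θ| / 2) :=
    Real.mul_le_sin (by positivity) (by linarith)
  have hs2 : |θ| / 4 ≤ Real.sin (|θ| / 2) := by
    refine le_trans ?_ hs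
    rw [div_mul_div_comm]
    rw [div_le_div_iff₀ (by norm_num) (by positivity)]
    nlinarith [abs_nonneg θ]
  have hc : Real.cos θ = 1 - 2 * Real.sin (|θ| / 2) ^ 2 := by
    have := Real.cos_two_mul (|θ| / 2)
    have h2 : 2 * (|θ| / 2) = |θ| := by ring
    rw [h2] at this
    have := Real.sin_sq_add_cos_sq (|θ| / 2)
    rw [← Real.cos_abs θ]
    nlinarith
  have habs : |θ| ^ 2 = θ ^ 2 := sq_abs θ
  nlinarith [abs_nonneg θ]

private lemma arc14_normsq {ξ : ℂ} (hξ : ‖ξ‖ = 1) (θ t : ℝ) :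
    ‖Complex.exp (θ * Complex.I) * ξ - ((1 - t : ℝ) : ℂ) * ξ‖ ^ 2
      = t ^ 2 + 2 * (1 - t) * (1 - Real.cos θ) := by
  have h : Complex.exp (θ * Complex.I) * ξ - ((1 - t : ℝ) : ℂ) * ξ
      = (Complex.exp (θ * Complex.I) - ((1 - t : ℝ) : ℂ)) * ξ := by ring
  rw [h, norm_mul, hξ, mul_one, Complex.sq_norm, Complex.normSq_apply]
  simp only [Complex.sub_re, Complex.sub_im, Complex.exp_ofReal_mul_I_re,
    Complex.exp_ofReal_mul_I_im, Complex.ofReal_re, Complex.ofReal_im]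
  have := Real.sin_sq_add_cos_sq θ
  nlinarith

set_option maxHeartbeats 1000000 in
/-- Remark: a doubling measure with doubling constant close to `2` satisfies
condition (b) of Theorem 1. -/
theorem statement14 (σ : Measure ℂ) [IsFiniteMeasure σ]
    (hsupp : σ (sphere (0 : ℂ) 1)ᶜ = 0)
    (ε : ℝ) (hε : ε ∈ Ioo (0 : ℝ) 1)
    (hdb : ∀ ξ : ℂ, ‖ξ‖ = 1 → ∀ t ∈ Ioc (0 : ℝ) 1,
      σ (bdryArc ξ (min (2 * t) 1)) ≤ ENNReal.ofReal (2 * (1 + ε)) * σ (bdryArc ξ t)) :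
    ∃ c > (0 : ℝ), ∀ ξ : ℂ, ‖ξ‖ = 1 → ∀ t ∈ Ioc (0 : ℝ) 1,
      c * (t * poissonInt σ (((1 : ℝ) - t) * ξ)) ≤ (σ (bdryArc ξ t)).toReal := by
  obtain ⟨hε0, hε1⟩ := hε
  have hπ := Real.pi_pos
  refine ⟨(1 - ε) / 16, by linarith, ?_⟩
  intro ξ hξ t ht
  obtain ⟨ht0, ht1⟩ := ht
  set M : ℝ≥0∞ := σ (bdryArc ξ t) with hM
  set D : ℝ≥0∞ := ENNReal.ofReal (2 * (1 + ε)) with hD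
  -- iterated doubling
  have harc : ∀ k : ℕ, σ (bdryArc ξ (min (2 ^ k * t) 1)) ≤ D ^ k * M := by
    intro k
    induction k with
    | zero => simp [min_eq_left ht1, hM]
    | succ k ih =>
      have hmem : min ((2:ℝ) ^ k * t) 1 ∈ Ioc (0:ℝ) 1 :=
        ⟨lt_min (by positivity) one_pos, min_le_right _ _⟩
      have h2 : min (2 * min ((2:ℝ) ^ k * t) 1) 1 = min (2 ^ (k + 1) * t) 1 := by
        rcases le_total ((2:ℝ) ^ k * t) 1 with h | h
        · rw [min_eq_left h]; congr 1; ring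
        · rw [min_eq_right h, min_eq_right (by norm_num : (1:ℝ) ≤ 2 * 1),
            min_eq_right (by rw [pow_succ, mul_comm ((2:ℝ) ^ k) 2, mul_assoc]; linarith :
              (1:ℝ) ≤ 2 ^ (k + 1) * t)]
      calc σ (bdryArc ξ (min (2 ^ (k + 1) * t) 1))
          = σ (bdryArc ξ (min (2 * min ((2:ℝ) ^ k * t) 1) 1)) := by rw [h2]
        _ ≤ D * σ (bdryArc ξ (min ((2:ℝ) ^ k * t) 1)) := hdb ξ hξ _ hmem
        _ ≤ D * (D ^ k * M) := mul_le_mul_right ih _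
        _ = D ^ (k + 1) * M := by ring
  set z : ℂ := ((1 : ℝ) - t) * ξ with hz
  have hz' : z = ((1 - t : ℝ) : ℂ) * ξ := by rw [hz]; push_cast; ring
  have hznorm : ‖z‖ = 1 - t := by
    rw [hz', norm_mul, Complex.norm_real, hξ, mul_one, Real.norm_eq_abs]
    exact abs_of_nonneg (by linarith)
  set f : ℂ → ℝ := fun η => (1 - ‖z‖ ^ 2) / ‖η - z‖ ^ 2 with hf
  have hnum : 1 - ‖z‖ ^ 2 = 2 * t - t ^ 2 := by rw [hznorm]; ring
  have hf0 : ∀ η, 0 ≤ f η := fun η => div_nonneg (by rw [hnum]; nlinarith) (by positivity)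
  -- pointwise bound on shells
  have hfle : ∀ (b : ℝ) (η : ℂ), 0 < b → b ≤ ‖η - z‖ ^ 2 → f η ≤ (2 * t - t ^ 2) / b := by
    intro b η hb hbe
    rw [hf]
    simp only
    rw [hnum]
    exact div_le_div_of_nonneg_left (by nlinarith) hb hbe
  -- the dyadic shells
  set S : ℕ → Set ℂ := fun k =>
    match k with
    | 0 => bdryArc ξ (min (2 ^ 1 * t) 1)
    | j + 1 => bdryArc ξ (min (2 ^ (j + 2) * t) 1) \ bdryArc ξ (min (2 ^ (j + 1) * t) 1)
    with hS
  have hSmeas : ∀ k, MeasurableSet (S k) := by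
    intro k
    match k with
    | 0 => exact arc14_meas _ _
    | j + 1 => exact (arc14_meas _ _).diff (arc14_meas _ _)
  have hSsub : ∀ k, S k ⊆ bdryArc ξ (min (2 ^ (k + 1) * t) 1) := by
    intro k
    match k with
    | 0 => exact subset_rfl
    | j + 1 => exact diff_subset
  -- the shells cover the circle
  have hcover : sphere (0 : ℂ) 1 ⊆ ⋃ k, S k := by
    have hstep : ∀ m : ℕ, bdryArc ξ (min (2 ^ (m + 1) * t) 1) ⊆ ⋃ k, S k := by
      intro m
      induction m with
      | zero => exact subset_iUnion S 0
      | succ j ih =>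
        intro η hη
        by_cases hmem : η ∈ bdryArc ξ (min (2 ^ (j + 1) * t) 1)
        · exact ih hmem
        · exact mem_iUnion.mpr ⟨j + 1, ⟨hη, hmem⟩⟩
    obtain ⟨N, hN⟩ := pow_unbounded_of_one_lt (1 / t) (one_lt_two (α := ℝ))
    have hNt : (1 : ℝ) ≤ 2 ^ (N + 1) * t := by
      rw [div_lt_iff₀ ht0] at hN
      have hp : (0:ℝ) < 2 ^ N := by positivity
      have h2 : (2:ℝ) ^ (N + 1) = 2 ^ N * 2 := pow_succ 2 N
      nlinarith
    intro η hη
    exact hstep N (by rw [min_eq_right hNt]; exact arc14_sphere hξ hη)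
  -- pointwise bound on each shell
  have hshell : ∀ k : ℕ, ∀ η ∈ S k, f η ≤ 2 * (4:ℝ)⁻¹ ^ k / t := by
    intro k η hη
    have hη1 : ‖η‖ = 1 := arc14_norm hξ (hSsub k hη)
    match k with
    | 0 =>
      have hge : t ≤ ‖η - z‖ := by
        have h := norm_sub_norm_le η z
        rw [hη1, hznorm] at h; linarith
      have hsq : t ^ 2 ≤ ‖η - z‖ ^ 2 := by nlinarith [norm_nonneg (η - z)]
      have heq : 2 * (4:ℝ)⁻¹ ^ 0 / t = 2 * t / t ^ 2 := by
        rw [pow_zero]; field_simp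
      calc f η ≤ (2 * t - t ^ 2) / t ^ 2 := hfle _ _ (by positivity) hsq
        _ ≤ 2 * t / t ^ 2 := by gcongr; nlinarith
        _ = 2 * (4:ℝ)⁻¹ ^ 0 / t := heq.symm
    | j + 1 =>
      have hη2 : η ∈ bdryArc ξ (min (2 ^ (j + 2) * t) 1) \
          bdryArc ξ (min (2 ^ (j + 1) * t) 1) := hη
      obtain ⟨hin, hout⟩ := hη2
      rcases lt_or_ge ((2:ℝ) ^ (j + 1) * t) 1 with hsm | hbig
      swap
      · exact absurd (show η ∈ bdryArc ξ (min (2 ^ (j + 1) * t) 1) by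
          rw [min_eq_right hbig]
          exact arc14_sphere hξ (mem_sphere_zero_iff_norm.mpr hη1)) hout
      · have h1j : (1:ℝ) ≤ 2 ^ j := one_le_pow₀ one_le_two
        have h2e : (2:ℝ) ≤ 2 ^ (j + 1) := by rw [pow_succ]; nlinarith
        have ht2 : t ≤ 1 / 2 := by nlinarith
        obtain ⟨θ, hθπ, hθeq⟩ := arc14_exists_arg hξ hη1
        have hθbig : Real.pi * (2 ^ (j + 1) * t) < |θ| := by
          by_contra hcon
          push_neg at hcon
          exact hout ⟨θ, by rw [min_eq_left hsm.le]; exact hcon, hθeq⟩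
        have hnz : ‖η - z‖ ^ 2 = t ^ 2 + 2 * (1 - t) * (1 - Real.cos θ) := by
          rw [hθeq, hz']; exact arc14_normsq hξ θ t
        have hcos := arc14_cos hθπ
        have hc0 : (0:ℝ) ≤ 1 - Real.cos θ := le_trans (by positivity) hcos
        have hπ8 : (8:ℝ) ≤ Real.pi ^ 2 := by nlinarith [Real.pi_gt_three]
        have h24 : ((2:ℝ) ^ (j + 1)) ^ 2 = 4 ^ (j + 1) := by
          rw [← pow_mul, mul_comm, pow_mul]; norm_num
        have hθ1 : (Real.pi * (2 ^ (j + 1) * t)) ^ 2 ≤ θ ^ 2 := by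
          have hnn : (0:ℝ) ≤ Real.pi * (2 ^ (j + 1) * t) := by positivity
          nlinarith [_root_.sq_abs θ]
        have hlow : (4:ℝ) ^ (j + 1) * t ^ 2 ≤ ‖η - z‖ ^ 2 := by
          rw [hnz]
          calc (4:ℝ) ^ (j + 1) * t ^ 2 = ((2:ℝ) ^ (j + 1) * t) ^ 2 := by
                rw [mul_pow, h24]
            _ ≤ (Real.pi * (2 ^ (j + 1) * t)) ^ 2 / 8 := by
                nlinarith [mul_nonneg (by linarith : (0:ℝ) ≤ Real.pi ^ 2 - 8)
                  (sq_nonneg ((2:ℝ) ^ (j + 1) * t))]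
            _ ≤ θ ^ 2 / 8 := by linarith
            _ ≤ 1 - Real.cos θ := hcos
            _ ≤ 2 * (1 - t) * (1 - Real.cos θ) := by nlinarith
            _ ≤ t ^ 2 + 2 * (1 - t) * (1 - Real.cos θ) := by nlinarith [sq_nonneg t]
        have h4p : (0:ℝ) < 4 ^ (j + 1) := by positivity
        have heq : 2 * (4:ℝ)⁻¹ ^ (j + 1) / t = 2 * t / (4 ^ (j + 1) * t ^ 2) := by
          rw [inv_pow, div_eq_div_iff ht0.ne' (by positivity)]
          field_simp
        calc f η ≤ (2 * t - t ^ 2) / (4 ^ (j + 1) * t ^ 2) := hfle _ _ (by positivity) hlow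
          _ ≤ 2 * t / (4 ^ (j + 1) * t ^ 2) := by gcongr ?_ / _; nlinarith
          _ = 2 * (4:ℝ)⁻¹ ^ (j + 1) / t := heq.symm
  -- measurability of the integrand
  have hfm : Measurable f := by
    apply Measurable.div measurable_const
    exact ((measurable_id.sub measurable_const).norm).pow measurable_const
  have hPI : poissonInt σ z = (∫⁻ η, ENNReal.ofReal (f η) ∂σ).toReal := by
    have h0 : poissonInt σ z = ∫ η, f η ∂σ := rfl
    rw [h0]
    exact integral_eq_lintegral_of_nonneg_ae (Filter.Eventually.of_forall hf0)
      hfm.aestronglyMeasurable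
  set r : ℝ≥0∞ := ENNReal.ofReal ((1 + ε) / 2) with hr
  set B : ℝ := 2 / t * (2 * (1 + ε)) * (2 / (1 - ε)) with hB
  have hterm : ∀ k : ℕ, ENNReal.ofReal (2 * (4:ℝ)⁻¹ ^ k / t) * (D ^ (k + 1) * M)
      = ENNReal.ofReal (2 / t) * D * M * r ^ k := by
    intro k
    have e1 : 2 * (4:ℝ)⁻¹ ^ k / t = 2 / t * ((4:ℝ)⁻¹) ^ k := by ring
    have e2 : r = ENNReal.ofReal (4:ℝ)⁻¹ * D := by
      rw [hr, hD, ← ENNReal.ofReal_mul (by norm_num)]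
      congr 1; ring
    rw [e1, ENNReal.ofReal_mul (by positivity), ENNReal.ofReal_pow (by norm_num),
      e2, mul_pow, pow_succ]
    ring
  have hgeom : (1 - r)⁻¹ = ENNReal.ofReal (2 / (1 - ε)) := by
    have h1 : (1 : ℝ≥0∞) - r = ENNReal.ofReal ((1 - ε) / 2) := by
      rw [hr, ← ENNReal.ofReal_one, ← ENNReal.ofReal_sub _ (by positivity)]
      norm_num
      ring_nf
    rw [h1, ← ENNReal.ofReal_inv_of_pos (by linarith), inv_div]
  have hL : (∫⁻ η, ENNReal.ofReal (f η) ∂σ) ≤ ENNReal.ofReal B * M := by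
    calc ∫⁻ η, ENNReal.ofReal (f η) ∂σ
        = (∫⁻ η in sphere (0:ℂ) 1, ENNReal.ofReal (f η) ∂σ)
          + ∫⁻ η in (sphere (0:ℂ) 1)ᶜ, ENNReal.ofReal (f η) ∂σ :=
          (lintegral_add_compl _ (isClosed_sphere.measurableSet)).symm
      _ = ∫⁻ η in sphere (0:ℂ) 1, ENNReal.ofReal (f η) ∂σ := by
          rw [setLIntegral_measure_zero _ _ hsupp, add_zero]
      _ ≤ ∫⁻ η in ⋃ k, S k, ENNReal.ofReal (f η) ∂σ := lintegral_mono_set hcover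
      _ ≤ ∑' k, ∫⁻ η in S k, ENNReal.ofReal (f η) ∂σ := lintegral_iUnion_le _ _
      _ ≤ ∑' k, ENNReal.ofReal (2 / t) * D * M * r ^ k := by
          refine ENNReal.tsum_le_tsum fun k => ?_
          calc ∫⁻ η in S k, ENNReal.ofReal (f η) ∂σ
              ≤ ∫⁻ _ in S k, ENNReal.ofReal (2 * (4:ℝ)⁻¹ ^ k / t) ∂σ :=
                setLIntegral_mono' (hSmeas k)
                  (fun η hη => ENNReal.ofReal_le_ofReal (hshell k η hη))
            _ = ENNReal.ofReal (2 * (4:ℝ)⁻¹ ^ k / t) * σ (S k) := setLIntegral_const _ _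
            _ ≤ ENNReal.ofReal (2 * (4:ℝ)⁻¹ ^ k / t) * (D ^ (k + 1) * M) :=
                mul_le_mul_right ((measure_mono (hSsub k)).trans (harc (k + 1))) _
            _ = ENNReal.ofReal (2 / t) * D * M * r ^ k := hterm k
      _ = ENNReal.ofReal (2 / t) * D * M * (1 - r)⁻¹ := by
          rw [ENNReal.tsum_mul_left, ENNReal.tsum_geometric]
      _ = ENNReal.ofReal B * M := by
          have hBsplit : ENNReal.ofReal B
              = ENNReal.ofReal (2 / t) * D * ENNReal.ofReal (2 / (1 - ε)) := by
            rw [hB, hD, ENNReal.ofReal_mul (by positivity), ENNReal.ofReal_mul (by positivity)]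
          rw [hgeom, hBsplit]
          ring
  have hfin : ENNReal.ofReal B * M ≠ ⊤ :=
    ENNReal.mul_ne_top ENNReal.ofReal_ne_top (measure_ne_top σ _)
  have hPle : poissonInt σ z ≤ B * M.toReal := by
    rw [hPI]
    calc (∫⁻ η, ENNReal.ofReal (f η) ∂σ).toReal ≤ (ENNReal.ofReal B * M).toReal :=
        ENNReal.toReal_mono hfin hL
      _ = B * M.toReal := by
          rw [ENNReal.toReal_mul, ENNReal.toReal_ofReal (by rw [hB]; exact mul_nonneg (mul_nonneg (by positivity) (by linarith)) (div_nonneg (by norm_num) (by linarith)))]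
  have hMr : (0:ℝ) ≤ M.toReal := ENNReal.toReal_nonneg
  calc (1 - ε) / 16 * (t * poissonInt σ z)
      ≤ (1 - ε) / 16 * (t * (B * M.toReal)) := by
        apply mul_le_mul_of_nonneg_left _ (by linarith : (0:ℝ) ≤ (1 - ε) / 16)
        exact mul_le_mul_of_nonneg_left hPle ht0.le
    _ = (1 - ε) / 16 * (t * B) * M.toReal := by ring
    _ = (1 + ε) / 2 * M.toReal := by
        have hε' : (1:ℝ) - ε ≠ 0 := ne_of_gt (by linarith)
        have hBt : t * B = 8 * (1 + ε) / (1 - ε) := by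
          rw [hB]; field_simp; ring
        rw [hBt]
        field_simp
        ring
    _ ≤ M.toReal := by nlinarith


end
end

section
/- Let σ be a finite positive Borel measure on ∂𝔻 with Poisson integral u(z) = ∫_{∂𝔻} (1−|z|²)/|ξ−z|² dσ(ξ), and suppose there exists c > 0 such that σ(I) ≥ c·|I|·u(z_I) for every arc I ⊂ ∂𝔻 (z_I = (1−|I|)ξ_I, ξ_I the center of I). Then there exists a constant D = D(c) ∈ (0,1) such that for every z ∈ 𝔻, | ∫_{∂𝔻} (1−|z|²) / (|ξ−z|² · τ_z(ξ)) dσ(ξ) | ≤ D · ∫_{∂𝔻} (1−|z|²)/|ξ−z|² dσ(ξ), where τ_z(ξ) = (ξ−z)/(1−z̄ξ). -/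
open MeasureTheory Complex Set Metric Filter
open scoped ENNReal NNReal Topology

noncomputable section

namespace Statement16Aux


/-- The Poisson kernel. -/
def pk (z ξ : ℂ) : ℝ := (1 - ‖z‖ ^ 2) / ‖ξ - z‖ ^ 2

/-- The boundary Möbius map. -/
def tz (z ξ : ℂ) : ℂ := (ξ - z) / (1 - (starRingEnd ℂ) z * ξ)

lemma norm_sub_ge (z ξ : ℂ) (hξ : ‖ξ‖ = 1) : 1 - ‖z‖ ≤ ‖ξ - z‖ := by
  have := norm_sub_norm_le ξ z
  linarith [hξ ▸ this]

lemma one_sub_conj_mul_eq (z ξ : ℂ) (hξ : ‖ξ‖ = 1) :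
    1 - (starRingEnd ℂ) z * ξ = ξ * (starRingEnd ℂ) (ξ - z) := by
  have h : ξ * (starRingEnd ℂ) ξ = 1 := by
    rw [Complex.mul_conj']; norm_num [hξ]
  rw [map_sub, mul_sub, h]; ring

lemma norm_one_sub_conj_mul (z ξ : ℂ) (hξ : ‖ξ‖ = 1) :
    ‖1 - (starRingEnd ℂ) z * ξ‖ = ‖ξ - z‖ := by
  rw [one_sub_conj_mul_eq z ξ hξ, norm_mul, hξ, one_mul, RCLike.norm_conj]

lemma one_sub_conj_mul_ne (z ξ : ℂ) (hz : ‖z‖ < 1) (hξ : ‖ξ‖ = 1) :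
    1 - (starRingEnd ℂ) z * ξ ≠ 0 := by
  intro h
  have : ‖(1:ℂ) - (starRingEnd ℂ) z * ξ‖ = 0 := by rw [h, norm_zero]
  rw [norm_one_sub_conj_mul z ξ hξ] at this
  have h2 := norm_sub_ge z ξ hξ
  rw [this] at h2; linarith

lemma sub_ne_zero_sphere (z ξ : ℂ) (hz : ‖z‖ < 1) (hξ : ‖ξ‖ = 1) : ξ - z ≠ 0 := by
  intro h
  have := norm_sub_ge z ξ hξ
  rw [h, norm_zero] at this; linarith

lemma norm_tz (z ξ : ℂ) (hz : ‖z‖ < 1) (hξ : ‖ξ‖ = 1) : ‖tz z ξ‖ = 1 := by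
  rw [tz, norm_div, norm_one_sub_conj_mul z ξ hξ,
    div_self (by have := norm_sub_ge z ξ hξ; intro h; rw [h] at this; linarith)]

lemma g_eq_conj_tz (z ξ : ℂ) (hz : ‖z‖ < 1) (hξ : ‖ξ‖ = 1) :
    (1 - (starRingEnd ℂ) z * ξ) / (ξ - z) = (starRingEnd ℂ) (tz z ξ) := by
  rw [tz, map_div₀, map_sub, map_sub, map_one, map_mul, RingHomCompTriple.comp_apply,
    RingHom.id_apply]
  have hξ0 : ξ ≠ 0 := by intro h; rw [h, norm_zero] at hξ; norm_num at hξ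
  have hc : (starRingEnd ℂ) ξ = ξ⁻¹ := by
    have h1 : ξ * (starRingEnd ℂ) ξ = 1 := by rw [Complex.mul_conj']; norm_num [hξ]
    field_simp
    linear_combination h1
  rw [hc]
  have h1 : ξ - z ≠ 0 := sub_ne_zero_sphere z ξ hz hξ
  have h2 : (1:ℂ) - z * ξ⁻¹ ≠ 0 := by
    intro h
    have : (1 - z * ξ⁻¹) * ξ = 0 := by rw [h, zero_mul]
    rw [sub_mul, one_mul, mul_assoc, inv_mul_cancel₀ hξ0, mul_one] at this
    exact h1 (by linear_combination this)
  field_simp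

lemma tz_sub (z ξ₁ ξ₂ : ℂ) (h1 : 1 - (starRingEnd ℂ) z * ξ₁ ≠ 0)
    (h2 : 1 - (starRingEnd ℂ) z * ξ₂ ≠ 0) :
    tz z ξ₁ - tz z ξ₂ = (1 - z * (starRingEnd ℂ) z) * (ξ₁ - ξ₂) /
      ((1 - (starRingEnd ℂ) z * ξ₁) * (1 - (starRingEnd ℂ) z * ξ₂)) := by
  rw [tz, tz, div_sub_div _ _ h1 h2]
  congr 1
  ring

lemma norm_tz_sub (z ξ₁ ξ₂ : ℂ) (hz : ‖z‖ < 1) (hξ1 : ‖ξ₁‖ = 1) (hξ2 : ‖ξ₂‖ = 1) :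
    ‖tz z ξ₁ - tz z ξ₂‖ = (1 - ‖z‖^2) * ‖ξ₁ - ξ₂‖ / (‖ξ₁ - z‖ * ‖ξ₂ - z‖) := by
  rw [tz_sub z ξ₁ ξ₂ (one_sub_conj_mul_ne z ξ₁ hz hξ1) (one_sub_conj_mul_ne z ξ₂ hz hξ2),
    norm_div, norm_mul, norm_mul, norm_one_sub_conj_mul z ξ₁ hξ1,
    norm_one_sub_conj_mul z ξ₂ hξ2]
  congr 2
  have : (1:ℂ) - z * (starRingEnd ℂ) z = ((1 - ‖z‖^2 : ℝ) : ℂ) := by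
    rw [Complex.mul_conj']; push_cast; ring
  rw [this, Complex.norm_real]
  exact _root_.abs_of_nonneg (by nlinarith [norm_nonneg z])

lemma chord_eq (α : ℝ) : ‖Complex.exp (α * Complex.I) - 1‖ = 2 * |Real.sin (α/2)| := by
  have h : Complex.exp (α * Complex.I) - 1 = Complex.mk (Real.cos α - 1) (Real.sin α) := by
    rw [Complex.exp_mul_I, Complex.mk_eq_add_mul_I]
    push_cast [Complex.ofReal_cos, Complex.ofReal_sin]
    ring
  rw [h]
  have : ‖Complex.mk (Real.cos α - 1) (Real.sin α)‖ =
      Real.sqrt ((Real.cos α - 1)^2 + (Real.sin α)^2) := by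
    rw [Complex.norm_def, Complex.normSq_mk]; ring_nf
  rw [this]
  have h2 : (Real.cos α - 1)^2 + (Real.sin α)^2 = 2 - 2 * Real.cos α := by
    nlinarith [Real.sin_sq_add_cos_sq α]
  rw [h2, show (2 - 2*Real.cos α) = 4 * ((1 - Real.cos α)/2) by ring,
    Real.sqrt_mul (by norm_num), show (4:ℝ) = 2^2 by norm_num,
    Real.sqrt_sq (by norm_num), ← Real.abs_sin_half]

lemma chord_le (α : ℝ) : ‖Complex.exp (α * Complex.I) - 1‖ ≤ |α| := by
  rw [chord_eq]
  calc 2 * |Real.sin (α/2)| ≤ 2 * |α/2| := by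
        have := Real.abs_sin_le_abs (x := α/2); linarith
    _ = |α| := by rw [abs_div, show |(2:ℝ)| = 2 by norm_num]; ring

lemma re_unit_mul (a b : ℂ) (ha : ‖a‖ = 1) (hb : ‖b‖ = 1) :
    (a * (starRingEnd ℂ) b).re = 1 - ‖a - b‖^2 / 2 := by
  have ha' : a.re^2 + a.im^2 = 1 := by
    have := Complex.sq_norm a; rw [Complex.normSq_apply] at this
    rw [ha] at this; linarith
  have hb' : b.re^2 + b.im^2 = 1 := by
    have := Complex.sq_norm b; rw [Complex.normSq_apply] at this
    rw [hb] at this; linarith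
  have : ‖a - b‖^2 = Complex.normSq (a - b) := Complex.sq_norm _
  rw [this, Complex.normSq_apply]
  simp [Complex.mul_re, Complex.sub_re, Complex.sub_im]
  ring_nf
  nlinarith [ha', hb']

lemma sin_lb (t x : ℝ) (ht : 0 < t) (ht1 : t ≤ 1)
    (hx1 : 3*Real.pi*t/8 ≤ x) (hx2 : x ≤ 5*Real.pi*t/8) : t/2 ≤ Real.sin x := by
  have hpi : (3:ℝ) < Real.pi := Real.pi_gt_three
  rcases le_or_gt x (Real.pi/2) with h | h
  · have hx0 : 0 ≤ x := le_trans (by positivity) hx1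
    have := Real.mul_le_sin hx0 h
    have h2 : 2/Real.pi * (3*Real.pi*t/8) ≤ 2/Real.pi * x := by
      apply mul_le_mul_of_nonneg_left hx1; positivity
    have h3 : 2/Real.pi * (3*Real.pi*t/8) = 3*t/4 := by field_simp; ring
    nlinarith
  · have hxpi : x ≤ Real.pi := by nlinarith
    have h0 : 0 ≤ Real.pi - x := by linarith
    have h1 : Real.pi - x ≤ Real.pi/2 := by linarith
    have := Real.mul_le_sin h0 h1
    rw [Real.sin_pi_sub] at this
    have h3 : Real.pi - x ≥ 3*Real.pi/8 := by nlinarith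
    have h4 : 2/Real.pi * (3*Real.pi/8) ≤ 2/Real.pi * (Real.pi - x) := by
      apply mul_le_mul_of_nonneg_left h3; positivity
    have h5 : 2/Real.pi * (3*Real.pi/8) = 3/4 := by field_simp; ring
    nlinarith

lemma integ_bdd {E : Type*} [NormedAddCommGroup E] (σ : Measure ℂ) [IsFiniteMeasure σ]
    {f : ℂ → E} (hf : AEStronglyMeasurable f σ) {C : ℝ}
    (h : ∀ᵐ ξ ∂σ, ‖f ξ‖ ≤ C) : Integrable f σ :=
  (integrable_const C).mono' hf h

lemma kernel_comp (z w ξ : ℂ) (hz : ‖z‖ < 1) (hξ : ‖ξ‖ = 1)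
    (hw : ‖w‖ = 1 - (1 - ‖z‖)/8) (hzw : ‖z - w‖ ≤ 3 * (1 - ‖z‖)) :
    pk z ξ / 256 ≤ pk w ξ := by
  set t := 1 - ‖z‖ with htdef
  have ht : 0 < t := by simp only [htdef]; linarith
  have ht1 : t ≤ 1 := by simp only [htdef]; linarith [norm_nonneg z]
  have hξz : t ≤ ‖ξ - z‖ := norm_sub_ge z ξ hξ
  have hξw : ‖ξ - w‖ ≤ 4 * ‖ξ - z‖ := by
    calc ‖ξ - w‖ = ‖(ξ - z) + (z - w)‖ := by ring_nf
      _ ≤ ‖ξ - z‖ + ‖z - w‖ := norm_add_le _ _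
      _ ≤ ‖ξ - z‖ + 3 * t := by linarith
      _ ≤ 4 * ‖ξ - z‖ := by linarith
  have hnw : 1 - ‖w‖^2 ≥ t/8 := by
    rw [hw]; nlinarith
  have hnz : 1 - ‖z‖^2 ≤ 2*t := by nlinarith [norm_nonneg z]
  have hξw0 : 0 < ‖ξ - w‖ := by
    have := norm_sub_ge w ξ hξ; rw [hw] at this; linarith
  rw [pk, pk, div_div, div_le_div_iff₀ (by nlinarith) (pow_pos hξw0 2)]
  have hB2 : ‖ξ - w‖^2 ≤ 16 * ‖ξ - z‖^2 := by nlinarith [norm_nonneg (ξ - w), norm_nonneg (ξ - z)]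
  have p1 : (1 - ‖z‖^2) * ‖ξ - w‖^2 ≤ 2*t * ‖ξ - w‖^2 :=
    mul_le_mul_of_nonneg_right hnz (sq_nonneg _)
  have p2 : 2*t * ‖ξ - w‖^2 ≤ 2*t * (16 * ‖ξ - z‖^2) :=
    mul_le_mul_of_nonneg_left hB2 (by positivity)
  have p3 : t/8 * (‖ξ - z‖^2 * 256) ≤ (1 - ‖w‖^2) * (‖ξ - z‖^2 * 256) :=
    mul_le_mul_of_nonneg_right hnw (by positivity)
  nlinarith [p1, p2, p3]

lemma pk_nonneg (z ξ : ℂ) (hz : ‖z‖ < 1) : 0 ≤ pk z ξ :=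
  div_nonneg (by nlinarith [norm_nonneg z]) (sq_nonneg _)

lemma pk_meas (z : ℂ) : Measurable (pk z) :=
  measurable_const.div (((measurable_id.sub measurable_const).norm).pow measurable_const)

lemma pk_bdd (z ξ : ℂ) (hz : ‖z‖ < 1) (hξ : ‖ξ‖ = 1) :
    pk z ξ ≤ (1 - ‖z‖^2) / (1 - ‖z‖)^2 := by
  have h1 : 1 - ‖z‖ ≤ ‖ξ - z‖ := norm_sub_ge z ξ hξ
  have h2 : 0 < 1 - ‖z‖ := by linarith
  have h3 : (1 - ‖z‖)^2 ≤ ‖ξ - z‖^2 := by nlinarith [norm_nonneg (ξ - z)]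
  have h4 : (0:ℝ) ≤ 1 - ‖z‖^2 := by nlinarith [norm_nonneg z]
  rw [pk, div_le_div_iff₀ (by nlinarith [norm_nonneg (ξ - z)]) (by positivity)]
  nlinarith [mul_le_mul_of_nonneg_left h3 h4]

lemma pk_integrable (σ : Measure ℂ) [IsFiniteMeasure σ] (hae : ∀ᵐ ξ ∂σ, ‖ξ‖ = 1)
    (z : ℂ) (hz : ‖z‖ < 1) : Integrable (pk z) σ := by
  apply integ_bdd σ (pk_meas z).aestronglyMeasurable (C := (1 - ‖z‖^2) / (1 - ‖z‖)^2)
  filter_upwards [hae] with ξ hξ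
  rw [Real.norm_eq_abs, _root_.abs_of_nonneg (pk_nonneg z ξ hz)]
  exact pk_bdd z ξ hz hξ

lemma poissonInt_eq (σ : Measure ℂ) (z : ℂ) : poissonInt σ z = ∫ ξ, pk z ξ ∂σ := rfl

lemma poissonInt_nonneg (σ : Measure ℂ) (z : ℂ) (hz : ‖z‖ < 1) : 0 ≤ poissonInt σ z := by
  rw [poissonInt_eq]
  exact integral_nonneg fun ξ => pk_nonneg z ξ hz

lemma tz_meas (z : ℂ) : Measurable (tz z) :=
  (measurable_id.sub measurable_const).div
    (measurable_const.sub (measurable_const.mul measurable_id))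

lemma h_integrable (σ : Measure ℂ) [IsFiniteMeasure σ] (hae : ∀ᵐ ξ ∂σ, ‖ξ‖ = 1)
    (z : ℂ) (hz : ‖z‖ < 1) (lam : ℂ) (hlam : ‖lam‖ = 1) :
    Integrable (fun ξ => pk z ξ * ‖lam - tz z ξ‖^2) σ := by
  have hhmeas : Measurable (fun ξ => pk z ξ * ‖lam - tz z ξ‖^2) :=
    (pk_meas z).mul (((measurable_const.sub (tz_meas z)).norm).pow measurable_const)
  apply integ_bdd σ hhmeas.aestronglyMeasurable (C := (1 - ‖z‖^2) / (1 - ‖z‖)^2 * 4)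
  filter_upwards [hae] with ξ hξ
  have hnn : 0 ≤ pk z ξ * ‖lam - tz z ξ‖^2 := mul_nonneg (pk_nonneg z ξ hz) (sq_nonneg _)
  rw [Real.norm_eq_abs, _root_.abs_of_nonneg hnn]
  have h1 : ‖lam - tz z ξ‖ ≤ 2 := by
    calc ‖lam - tz z ξ‖ ≤ ‖lam‖ + ‖tz z ξ‖ := norm_sub_le _ _
      _ = 2 := by rw [hlam, norm_tz z ξ hz hξ]; norm_num
  have h2 : ‖lam - tz z ξ‖^2 ≤ 4 := by nlinarith [norm_nonneg (lam - tz z ξ)]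
  have h3 := pk_bdd z ξ hz hξ
  have h4 := pk_nonneg z ξ hz
  have h5 : (0:ℝ) ≤ (1 - ‖z‖^2) / (1 - ‖z‖)^2 := le_trans h4 h3
  calc pk z ξ * ‖lam - tz z ξ‖^2 ≤ pk z ξ * 4 := by nlinarith
    _ ≤ (1 - ‖z‖^2) / (1 - ‖z‖)^2 * 4 := by nlinarith

set_option maxHeartbeats 2000000 in
lemma star (σ : Measure ℂ) [IsFiniteMeasure σ]
    (hae : ∀ᵐ ξ ∂σ, ‖ξ‖ = 1)
    (c : ℝ) (hc : 0 < c)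
    (hb : ∀ ξ : ℂ, ‖ξ‖ = 1 → ∀ t ∈ Ioc (0 : ℝ) 1,
      c * (t * poissonInt σ (((1 : ℝ) - t) * ξ)) ≤ (σ (bdryArc ξ t)).toReal)
    (z : ℂ) (hz : ‖z‖ < 1) (ξ₀ : ℂ) (hξ₀ : ‖ξ₀‖ = 1) (hzdec : z = (‖z‖ : ℂ) * ξ₀)
    (lam : ℂ) (hlam : ‖lam‖ = 1) :
    c / 128000000 * poissonInt σ z ≤ ∫ ξ, pk z ξ * ‖lam - tz z ξ‖^2 ∂σ := by
  have hpi3 : (3:ℝ) < Real.pi := Real.pi_gt_three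
  have hpi4 : Real.pi < 4 := by linarith [Real.pi_lt_d2]
  set t : ℝ := 1 - ‖z‖ with htdef
  have ht : 0 < t := by simp only [htdef]; linarith
  have ht1 : t ≤ 1 := by simp only [htdef]; linarith [norm_nonneg z]
  set ζ : ℝ → ℂ := fun s => Complex.exp ((s * (Real.pi * t / 2) : ℝ) * Complex.I) * ξ₀
    with hζdef
  have hζ : ∀ s : ℝ, ‖ζ s‖ = 1 := by
    intro s; simp only [hζdef]
    rw [norm_mul, hξ₀, mul_one]
    exact Complex.norm_exp_ofReal_mul_I _
  set A : ℝ → Set ℂ := fun s => bdryArc (ζ s) (t/8) with hAdef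
  -- membership decomposition
  have hmem : ∀ s : ℝ, ∀ ξ ∈ A s, ∃ α : ℝ,
      |α - s * (Real.pi * t / 2)| ≤ Real.pi * t / 8 ∧
      ξ = Complex.exp ((α : ℂ) * Complex.I) * ξ₀ := by
    intro s ξ hξA
    obtain ⟨θ, hθ, hξeq⟩ := hξA
    refine ⟨θ + s * (Real.pi * t / 2), by simpa using (by linarith [abs_nonneg θ] : |θ| ≤ Real.pi * t / 8), ?_⟩
    rw [hξeq, hζdef]
    rw [← mul_assoc, ← Complex.exp_add]
    norm_num
    left
    push_cast
    ring
  -- basic properties of points on the arcs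
  have hprop : ∀ s : ℝ, |s| ≤ 1 → ∀ ξ ∈ A s, ‖ξ‖ = 1 ∧ ‖ξ - z‖ ≤ 5 * t := by
    intro s hs ξ hξA
    obtain ⟨α, hα, hξeq⟩ := hmem s ξ hξA
    have hαb : |α| ≤ 5 * Real.pi * t / 8 := by
      have h1 : |s * (Real.pi * t / 2)| ≤ Real.pi * t / 2 := by
        rw [abs_mul, _root_.abs_of_nonneg (by positivity : (0:ℝ) ≤ Real.pi * t / 2)]
        nlinarith [mul_le_mul_of_nonneg_right hs (by positivity : (0:ℝ) ≤ Real.pi * t / 2)]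
      calc |α| ≤ |α - s * (Real.pi * t / 2)| + |s * (Real.pi * t / 2)| := by
            have := abs_add_le (α - s * (Real.pi * t / 2)) (s * (Real.pi * t / 2)); simpa using this
        _ ≤ 5 * Real.pi * t / 8 := by linarith
    have hunit : ‖ξ‖ = 1 := by
      rw [hξeq, norm_mul, Complex.norm_exp_ofReal_mul_I, hξ₀, one_mul]
    refine ⟨hunit, ?_⟩
    have hnear : ‖ξ - ξ₀‖ ≤ Real.pi * t := by
      have : ξ - ξ₀ = (Complex.exp ((α : ℂ) * Complex.I) - 1) * ξ₀ := by
        rw [hξeq]; ring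
      rw [this, norm_mul, hξ₀, mul_one]
      calc ‖Complex.exp ((α : ℂ) * Complex.I) - 1‖ ≤ |α| := chord_le α
        _ ≤ Real.pi * t := by nlinarith
    have hz0 : ‖ξ₀ - z‖ = t := by
      rw [hzdec, show ξ₀ - (‖z‖ : ℂ) * ξ₀ = ((1 - ‖z‖ : ℝ) : ℂ) * ξ₀ by push_cast; ring,
        norm_mul, hξ₀, mul_one, Complex.norm_real, Real.norm_eq_abs,
        _root_.abs_of_nonneg (by linarith)]
    calc ‖ξ - z‖ ≤ ‖ξ - ξ₀‖ + ‖ξ₀ - z‖ := by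
          have := norm_add_le (ξ - ξ₀) (ξ₀ - z); simpa using this
      _ ≤ Real.pi * t + t := by rw [hz0] at *; linarith
      _ ≤ 5 * t := by nlinarith
  -- Poisson kernel lower bound on the arcs
  have hpklb : ∀ s : ℝ, |s| ≤ 1 → ∀ ξ ∈ A s, 1 / (25 * t) ≤ pk z ξ := by
    intro s hs ξ hξA
    obtain ⟨hunit, hdist⟩ := hprop s hs ξ hξA
    have h1 : t ≤ ‖ξ - z‖ := norm_sub_ge z ξ hunit
    have h2 : t ≤ 1 - ‖z‖^2 := by nlinarith [norm_nonneg z]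
    rw [pk, div_le_div_iff₀ (by linarith) (by nlinarith)]
    nlinarith [norm_nonneg (ξ - z)]
  -- separation of the images of the two arcs
  have hsep : ∀ ξ₁ ∈ A (-1), ∀ ξ₂ ∈ A 1, 1/25 ≤ ‖tz z ξ₁ - tz z ξ₂‖ := by
    intro ξ₁ h₁ ξ₂ h₂
    obtain ⟨α₁, hα₁, hξ₁eq⟩ := hmem (-1) ξ₁ h₁
    obtain ⟨α₂, hα₂, hξ₂eq⟩ := hmem 1 ξ₂ h₂
    obtain ⟨hu₁, hd₁⟩ := hprop (-1) (by norm_num) ξ₁ h₁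
    obtain ⟨hu₂, hd₂⟩ := hprop 1 (by norm_num) ξ₂ h₂
    rw [abs_le] at hα₁ hα₂
    set Δ : ℝ := α₂ - α₁ with hΔdef
    have hΔ1 : 3 * Real.pi * t / 4 ≤ Δ := by simp only [hΔdef]; nlinarith [hα₁.2, hα₂.1]
    have hΔ2 : Δ ≤ 5 * Real.pi * t / 4 := by simp only [hΔdef]; nlinarith [hα₁.1, hα₂.2]
    have hkey : Complex.exp ((α₁ : ℂ) * Complex.I) * Complex.exp ((Δ : ℂ) * Complex.I)
        = Complex.exp ((α₂ : ℂ) * Complex.I) := by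
      rw [← Complex.exp_add]
      congr 1
      push_cast [hΔdef]
      ring
    have hdiffeq : ξ₂ - ξ₁ = Complex.exp ((α₁ : ℂ) * Complex.I) *
        (Complex.exp ((Δ : ℂ) * Complex.I) - 1) * ξ₀ := by
      rw [hξ₂eq, hξ₁eq]
      linear_combination (-ξ₀) * hkey
    have hchord : t ≤ ‖ξ₂ - ξ₁‖ := by
      rw [hdiffeq, norm_mul, norm_mul, Complex.norm_exp_ofReal_mul_I, hξ₀, one_mul, mul_one,
        chord_eq]
      have := sin_lb t (Δ/2) ht ht1 (by linarith) (by linarith)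
      have habs := le_abs_self (Real.sin (Δ/2))
      linarith
    have h12 : ‖ξ₁ - ξ₂‖ = ‖ξ₂ - ξ₁‖ := norm_sub_rev _ _
    rw [norm_tz_sub z ξ₁ ξ₂ hz hu₁ hu₂, h12]
    have hnum : t ≤ 1 - ‖z‖^2 := by nlinarith [norm_nonneg z]
    have hd₁' : t ≤ ‖ξ₁ - z‖ := norm_sub_ge z ξ₁ hu₁
    have hd₂' : t ≤ ‖ξ₂ - z‖ := norm_sub_ge z ξ₂ hu₂
    rw [le_div_iff₀ (mul_pos (lt_of_lt_of_le ht hd₁') (lt_of_lt_of_le ht hd₂'))]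
    have e1 : ‖ξ₁ - z‖ * ‖ξ₂ - z‖ ≤ 5*t * (5*t) :=
      mul_le_mul hd₁ hd₂ (le_trans ht.le hd₂') (by linarith)
    have e2 : t * t ≤ (1 - ‖z‖^2) * ‖ξ₂ - ξ₁‖ :=
      mul_le_mul hnum hchord ht.le (le_trans ht.le hnum)
    nlinarith [e1, e2]
  -- choose the good arc
  obtain ⟨s, hs, hfar⟩ : ∃ s : ℝ, |s| ≤ 1 ∧ ∀ ξ ∈ A s, 1/50 ≤ ‖lam - tz z ξ‖ := by
    by_cases hca : ∀ ξ ∈ A (-1), 1/50 ≤ ‖lam - tz z ξ‖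
    · exact ⟨-1, by norm_num, hca⟩
    · push_neg at hca
      obtain ⟨ξ₁, hξ₁A, hlt⟩ := hca
      refine ⟨1, by norm_num, fun ξ₂ h₂ => ?_⟩
      have h1 := hsep ξ₁ hξ₁A ξ₂ h₂
      have h2 : ‖tz z ξ₁ - tz z ξ₂‖ ≤ ‖lam - tz z ξ₁‖ + ‖lam - tz z ξ₂‖ := by
        have h3 : tz z ξ₁ - tz z ξ₂ = (lam - tz z ξ₂) - (lam - tz z ξ₁) := by ring
        rw [h3]
        linarith [norm_sub_le (lam - tz z ξ₂) (lam - tz z ξ₁)]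
      linarith
  -- measurability of the arc
  have hAmeas : MeasurableSet (A s) := by
    have himg : A s = (fun θ : ℝ => Complex.exp ((θ : ℂ) * Complex.I) * ζ s) ''
        (Icc (-(Real.pi * (t/8))) (Real.pi * (t/8))) := by
      ext η
      simp only [hAdef, bdryArc, mem_setOf_eq, mem_image, mem_Icc]
      constructor
      · rintro ⟨θ, hθ, rfl⟩
        exact ⟨θ, abs_le.mp hθ, rfl⟩
      · rintro ⟨θ, hθ, rfl⟩
        exact ⟨θ, abs_le.mpr hθ, rfl⟩
    rw [himg]
    apply (isCompact_Icc.image ?_).measurableSet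
    exact (Complex.continuous_exp.comp (Complex.continuous_ofReal.mul continuous_const)).mul
      continuous_const
  -- the integrand
  set h : ℂ → ℝ := fun ξ => pk z ξ * ‖lam - tz z ξ‖^2 with hhdef
  have hhnn : ∀ ξ, 0 ≤ h ξ := fun ξ => mul_nonneg (pk_nonneg z ξ hz) (sq_nonneg _)
  have hhmeas : Measurable h :=
    (pk_meas z).mul (((measurable_const.sub (tz_meas z)).norm).pow measurable_const)
  have hhint : Integrable h σ := h_integrable σ hae z hz lam hlam
  -- the mass of the arc
  set w : ℂ := ((1 - t/8 : ℝ) : ℂ) * ζ s with hwdef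
  have key3 : c * (t/8 * poissonInt σ w) ≤ (σ (A s)).toReal := by
    have h0 := hb (ζ s) (hζ s) (t/8) ⟨by linarith, by linarith⟩
    have hcast : ((1 : ℝ) : ℂ) - ((t/8 : ℝ) : ℂ) = ((1 - t/8 : ℝ) : ℂ) := by push_cast; ring
    rw [hcast] at h0
    exact h0
  -- Harnack-type comparison
  have key4 : poissonInt σ z / 256 ≤ poissonInt σ w := by
    have hwn : ‖w‖ = 1 - t/8 := by
      rw [hwdef, norm_mul, hζ s, mul_one, Complex.norm_real, Real.norm_eq_abs,
        _root_.abs_of_nonneg (by linarith)]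
    have hw1 : ‖w‖ < 1 := by rw [hwn]; linarith
    have hzw : ‖z - w‖ ≤ 3 * t := by
      have hsplit : z - w = ((‖z‖ - (1 - t/8) : ℝ) : ℂ) * ξ₀
          + ((1 - t/8 : ℝ) : ℂ) * (ξ₀ - ζ s) := by
        rw [hwdef]; push_cast; linear_combination hzdec
      have hζdist : ‖ξ₀ - ζ s‖ ≤ Real.pi * t / 2 := by
        have : ξ₀ - ζ s = -((Complex.exp ((s * (Real.pi * t / 2) : ℝ) * Complex.I) - 1) * ξ₀) := by
          rw [hζdef]; ring
        rw [this, norm_neg, norm_mul, hξ₀, mul_one]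
        calc ‖Complex.exp (((s * (Real.pi * t / 2) : ℝ) : ℂ) * Complex.I) - 1‖
            ≤ |s * (Real.pi * t / 2)| := chord_le _
          _ ≤ Real.pi * t / 2 := by
            rw [abs_mul, _root_.abs_of_nonneg (by positivity : (0:ℝ) ≤ Real.pi * t / 2)]
            nlinarith [mul_le_mul_of_nonneg_right hs (by positivity : (0:ℝ) ≤ Real.pi * t / 2)]
      calc ‖z - w‖ ≤ ‖((‖z‖ - (1 - t/8) : ℝ) : ℂ) * ξ₀‖
            + ‖((1 - t/8 : ℝ) : ℂ) * (ξ₀ - ζ s)‖ := by rw [hsplit]; exact norm_add_le _ _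
        _ ≤ |‖z‖ - (1 - t/8)| + |1 - t/8| * (Real.pi * t / 2) := by
            rw [norm_mul, norm_mul, hξ₀, mul_one, Complex.norm_real, Complex.norm_real,
              Real.norm_eq_abs, Real.norm_eq_abs]
            have h0 : (0:ℝ) ≤ |1 - t/8| := abs_nonneg _
            nlinarith [abs_nonneg (1 - t/8)]
        _ ≤ 7*t/8 + Real.pi * t / 2 := by
            have h1 : |‖z‖ - (1 - t/8)| = 7*t/8 := by
              rw [show ‖z‖ - (1 - t/8) = -(7*t/8) by simp only [htdef]; ring, abs_neg,
                _root_.abs_of_nonneg (by linarith)]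
            have h2 : |1 - t/8| ≤ 1 := by
              rw [_root_.abs_of_nonneg (by linarith)]; linarith
            nlinarith [mul_le_mul_of_nonneg_right h2 (by positivity : (0:ℝ) ≤ Real.pi * t / 2)]
        _ ≤ 3 * t := by nlinarith
    have hcomp : ∀ᵐ ξ ∂σ, pk z ξ / 256 ≤ pk w ξ := by
      filter_upwards [hae] with ξ hξ
      exact kernel_comp z w ξ hz hξ (by rw [hwn]) hzw
    rw [poissonInt_eq, poissonInt_eq]
    rw [div_eq_mul_inv, ← integral_mul_const]
    apply integral_mono_ae ((pk_integrable σ hae z hz).mul_const _)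
      (pk_integrable σ hae w hw1)
    filter_upwards [hcomp] with ξ hξ
    rw [← div_eq_mul_inv]
    exact hξ
  -- pointwise lower bound on the arc and putting things together
  have key2 : 1/62500 * (1/t) * (σ (A s)).toReal ≤ ∫ ξ in A s, h ξ ∂σ := by
    apply setIntegral_ge_of_const_le_real hAmeas (measure_ne_top σ _)
    · intro ξ hξA
      have h1 := hpklb s hs ξ hξA
      have h2 := hfar ξ hξA
      have h3 : (1/50 : ℝ)^2 ≤ ‖lam - tz z ξ‖^2 := by nlinarith
      rw [hhdef]
      calc (1/62500 : ℝ) * (1/t) = 1/(25*t) * (1/50)^2 := by field_simp; ring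
        _ ≤ pk z ξ * ‖lam - tz z ξ‖^2 := by
            apply mul_le_mul h1 h3 (by positivity) (le_trans (by positivity) h1)
    · exact hhint.integrableOn
  have key1 : ∫ ξ in A s, h ξ ∂σ ≤ ∫ ξ, h ξ ∂σ :=
    setIntegral_le_integral hhint (Eventually.of_forall hhnn)
  have hupos : 0 ≤ poissonInt σ z := poissonInt_nonneg σ z hz
  calc c / 128000000 * poissonInt σ z
      = 1/62500 * (1/t) * (c * (t/8 * (poissonInt σ z / 256))) := by field_simp; ring
    _ ≤ 1/62500 * (1/t) * (c * (t/8 * poissonInt σ w)) := by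
        have hmono : c * (t/8 * (poissonInt σ z / 256))
            ≤ c * (t/8 * poissonInt σ w) := by
          apply mul_le_mul_of_nonneg_left _ (le_of_lt hc)
          apply mul_le_mul_of_nonneg_left key4 (by positivity)
        apply mul_le_mul_of_nonneg_left hmono (by positivity)
    _ ≤ 1/62500 * (1/t) * (σ (A s)).toReal := by
        apply mul_le_mul_of_nonneg_left key3 (by positivity)
    _ ≤ ∫ ξ in A s, h ξ ∂σ := key2
    _ ≤ ∫ ξ, h ξ ∂σ := key1

theorem main (σ : Measure ℂ) [IsFiniteMeasure σ]
    (hsupp : σ (sphere (0 : ℂ) 1)ᶜ = 0)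
    (c : ℝ) (hc : 0 < c)
    (hb : ∀ ξ : ℂ, ‖ξ‖ = 1 → ∀ t ∈ Ioc (0 : ℝ) 1,
      c * (t * poissonInt σ (((1 : ℝ) - t) * ξ)) ≤ (σ (bdryArc ξ t)).toReal) :
    ∃ D ∈ Ioo (0 : ℝ) 1, ∀ z ∈ ball (0 : ℂ) 1,
      ‖∫ ξ, (((1 - ‖z‖ ^ 2) / ‖ξ - z‖ ^ 2 : ℝ) : ℂ) *
          ((1 - (starRingEnd ℂ) z * ξ) / (ξ - z)) ∂σ‖ ≤ D * poissonInt σ z := by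
  have hae : ∀ᵐ ξ ∂σ, ‖ξ‖ = 1 := by
    rw [ae_iff]
    convert hsupp using 2
    ext ξ
    simp [mem_sphere_zero_iff_norm]
  set ε : ℝ := c / 128000000 with hεdef
  have hε : 0 < ε := by positivity
  refine ⟨max (1 - ε/2) (1/2), ⟨lt_of_lt_of_le (by norm_num) (le_max_right _ _), ?_⟩, ?_⟩
  · exact max_lt (by linarith) (by norm_num)
  intro z hz
  have hz1 : ‖z‖ < 1 := mem_ball_zero_iff.mp hz
  have hu0 : 0 ≤ poissonInt σ z := poissonInt_nonneg σ z hz1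
  have hD1 : (1:ℝ) - ε/2 ≤ max (1 - ε/2) (1/2) := le_max_left _ _
  have hDpos : (0:ℝ) < max (1 - ε/2) (1/2) := lt_of_lt_of_le (by norm_num) (le_max_right _ _)
  obtain ⟨ξ₀, hξ₀, hzdec⟩ : ∃ ξ₀ : ℂ, ‖ξ₀‖ = 1 ∧ z = (‖z‖ : ℂ) * ξ₀ := by
    rcases eq_or_ne z 0 with h | h
    · exact ⟨1, norm_one, by simp [h]⟩
    · refine ⟨(‖z‖ : ℂ)⁻¹ * z, ?_, ?_⟩
      · rw [norm_mul, norm_inv, Complex.norm_real, Real.norm_eq_abs,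
          _root_.abs_of_nonneg (norm_nonneg z), inv_mul_cancel₀ (norm_ne_zero_iff.mpr h)]
      · rw [← mul_assoc, mul_inv_cancel₀, one_mul]
        simpa [Complex.ofReal_eq_zero, norm_eq_zero] using h
  set f : ℂ → ℂ := fun ξ => (((1 - ‖z‖ ^ 2) / ‖ξ - z‖ ^ 2 : ℝ) : ℂ) *
      ((1 - (starRingEnd ℂ) z * ξ) / (ξ - z)) with hfdef
  have hfmeas : Measurable f := by
    apply Measurable.mul
    · exact Complex.measurable_ofReal.comp (pk_meas z)
    · exact (measurable_const.sub (measurable_const.mul measurable_id)).div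
        (measurable_id.sub measurable_const)
  have hfnorm : ∀ᵐ ξ ∂σ, ‖f ξ‖ = pk z ξ := by
    filter_upwards [hae] with ξ hξ
    rw [hfdef]
    simp only []
    rw [norm_mul, norm_div, norm_one_sub_conj_mul z ξ hξ, Complex.norm_real, Real.norm_eq_abs,
      div_self (by have h0 := norm_sub_ge z ξ hξ; intro h1; rw [h1] at h0; linarith), mul_one]
    exact _root_.abs_of_nonneg (pk_nonneg z ξ hz1)
  have hfint : Integrable f σ := by
    apply integ_bdd σ hfmeas.aestronglyMeasurable (C := (1 - ‖z‖^2) / (1 - ‖z‖)^2)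
    filter_upwards [hfnorm, hae] with ξ h1 h2
    rw [h1]
    exact pk_bdd z ξ hz1 h2
  set w : ℂ := ∫ ξ, f ξ ∂σ with hwdef
  rcases eq_or_ne w 0 with hw0 | hw0
  · rw [hw0, norm_zero]; exact mul_nonneg hDpos.le hu0
  set μ : ℂ := (starRingEnd ℂ) w / (‖w‖ : ℂ) with hμdef
  have hμ : ‖μ‖ = 1 := by
    rw [hμdef, norm_div, RCLike.norm_conj, Complex.norm_real, Real.norm_eq_abs,
      _root_.abs_of_nonneg (norm_nonneg w), div_self (norm_ne_zero_iff.mpr hw0)]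
  have hre : (μ * w).re = ‖w‖ := by
    have hwne : ((‖w‖ : ℝ) : ℂ) ≠ 0 := by
      simpa [Complex.ofReal_eq_zero, norm_eq_zero] using hw0
    have hmul : μ * w = ((‖w‖ : ℝ) : ℂ) := by
      rw [hμdef, div_mul_eq_mul_div, mul_comm ((starRingEnd ℂ) w) w, Complex.mul_conj', sq,
        mul_div_assoc, div_self hwne, mul_one]
    rw [hmul, Complex.ofReal_re]
  have step : ‖w‖ = ∫ ξ, (μ * f ξ).re ∂σ := by
    have h1 : ∫ ξ, (μ * f ξ).re ∂σ = (∫ ξ, μ * f ξ ∂σ).re := integral_re (hfint.const_mul μ)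
    rw [h1, integral_const_mul, ← hwdef, hre]
  have haeeq : ∀ᵐ ξ ∂σ, (μ * f ξ).re = pk z ξ - pk z ξ * ‖μ - tz z ξ‖^2 / 2 := by
    filter_upwards [hae] with ξ hξ
    have hg : (1 - (starRingEnd ℂ) z * ξ) / (ξ - z) = (starRingEnd ℂ) (tz z ξ) :=
      g_eq_conj_tz z ξ hz1 hξ
    have hμf : μ * f ξ = ((pk z ξ : ℝ) : ℂ) * (μ * (starRingEnd ℂ) (tz z ξ)) := by
      rw [hfdef]
      simp only []
      rw [show ((1 - ‖z‖ ^ 2) / ‖ξ - z‖ ^ 2 : ℝ) = pk z ξ from rfl, hg]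
      ring
    rw [hμf, Complex.re_ofReal_mul, re_unit_mul μ (tz z ξ) hμ (norm_tz z ξ hz1 hξ)]
    ring
  have h2int : Integrable (fun ξ => pk z ξ * ‖μ - tz z ξ‖^2) σ :=
    h_integrable σ hae z hz1 μ hμ
  have hsplitint : ∫ ξ, (μ * f ξ).re ∂σ
      = poissonInt σ z - (∫ ξ, pk z ξ * ‖μ - tz z ξ‖^2 ∂σ) / 2 := by
    rw [integral_congr_ae haeeq, poissonInt_eq]
    rw [integral_sub (pk_integrable σ hae z hz1) (h2int.div_const 2), integral_div]
  have hstar := star σ hae c hc hb z hz1 ξ₀ hξ₀ hzdec μ hμ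
  calc ‖w‖ ≤ (1 - ε/2) * poissonInt σ z := by
        rw [step, hsplitint]
        rw [hεdef]
        linarith [hstar]
    _ ≤ max (1 - ε/2) (1/2) * poissonInt σ z := mul_le_mul_of_nonneg_right hD1 hu0

end Statement16Aux

/-- Key estimate in the proof of (b) ⟹ (a) of Theorem 1: cancellation in the
twisted Poisson integral. -/
theorem statement16 (σ : Measure ℂ) [IsFiniteMeasure σ]
    (hsupp : σ (sphere (0 : ℂ) 1)ᶜ = 0)
    (c : ℝ) (hc : 0 < c)
    (hb : ∀ ξ : ℂ, ‖ξ‖ = 1 → ∀ t ∈ Ioc (0 : ℝ) 1,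
      c * (t * poissonInt σ (((1 : ℝ) - t) * ξ)) ≤ (σ (bdryArc ξ t)).toReal) :
    ∃ D ∈ Ioo (0 : ℝ) 1, ∀ z ∈ ball (0 : ℂ) 1,
      ‖∫ ξ, (((1 - ‖z‖ ^ 2) / ‖ξ - z‖ ^ 2 : ℝ) : ℂ) *
          ((1 - (starRingEnd ℂ) z * ξ) / (ξ - z)) ∂σ‖ ≤ D * poissonInt σ z :=
  Statement16Aux.main σ hsupp c hc hb

end
end

section
/- Let 0 < η < c < 1 and let I ⊂ ∂𝔻 be an arc. Let 𝒢 = {I_j} be a collection of pairwise disjoint dyadic subarcs of I with Σ_j |I_j| ≥ c·|I|. Then there exists a subcollection 𝒢₁ ⊆ 𝒢 such that (i) Σ_{I_j ∈ 𝒢₁} |I_j| ≥ η·|I|, and (ii) for every dyadic subarc L ⊆ I that contains some arc of 𝒢₁, Σ_{I_j ∈ 𝒢, I_j ⊆ L} |I_j| ≥ (c−η)·|L|. -/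
open MeasureTheory Complex Set Metric Filter
open scoped ENNReal NNReal Topology

noncomputable section

namespace S17

/-- The ancestor relation on dyadic indices. -/
def anc (q p : ℕ × ℕ) : Prop := q.1 ≤ p.1 ∧ p.2 / 2 ^ (p.1 - q.1) = q.2

lemma anc_trans {q r p : ℕ × ℕ} (h1 : anc q r) (h2 : anc r p) : anc q p := by
  obtain ⟨h1a, h1b⟩ := h1; obtain ⟨h2a, h2b⟩ := h2
  refine ⟨h1a.trans h2a, ?_⟩
  have h : p.1 - q.1 = (p.1 - r.1) + (r.1 - q.1) := by omega
  rw [h, pow_add, ← Nat.div_div_eq_div_mul, h2b, h1b]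

lemma anc_eq_of_ge {q' q : ℕ × ℕ} (h : anc q' q) (hg : q'.1 ≥ q.1) : q' = q := by
  have hg' : q.1 = q'.1 := le_antisymm hg h.1
  have h2 := h.2
  rw [hg', Nat.sub_self, pow_zero, Nat.div_one] at h2
  exact (Prod.ext hg' h2).symm

/-- Cross-multiplied inequalities imply ancestry. -/
lemma anc_of_mul_le {p q : ℕ × ℕ} (h1 : q.2 * 2 ^ p.1 ≤ p.2 * 2 ^ q.1)
    (h2 : (p.2 + 1) * 2 ^ q.1 ≤ (q.2 + 1) * 2 ^ p.1) : anc q p := by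
  rcases le_or_gt q.1 p.1 with hle | hlt
  · refine ⟨hle, ?_⟩
    have hpow : (2:ℕ) ^ p.1 = 2 ^ (p.1 - q.1) * 2 ^ q.1 := by
      rw [← pow_add]; congr 1; omega
    have h2q : 0 < 2 ^ q.1 := Nat.pow_pos (by norm_num)
    rw [hpow, ← mul_assoc] at h1 h2
    have h1' : q.2 * 2 ^ (p.1 - q.1) ≤ p.2 :=
      Nat.le_of_mul_le_mul_right h1 h2q
    have h2' : p.2 + 1 ≤ (q.2 + 1) * 2 ^ (p.1 - q.1) :=
      Nat.le_of_mul_le_mul_right h2 h2q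
    exact Nat.div_eq_of_lt_le h1' (by omega)
  · exfalso
    have hpow : (2:ℕ) ^ q.1 = 2 ^ (q.1 - p.1) * 2 ^ p.1 := by
      rw [← pow_add]; congr 1; omega
    have h2p : 0 < 2 ^ p.1 := Nat.pow_pos (by norm_num)
    rw [hpow, ← mul_assoc] at h1 h2
    have h1' : q.2 ≤ p.2 * 2 ^ (q.1 - p.1) :=
      Nat.le_of_mul_le_mul_right h1 h2p
    have h2' : (p.2 + 1) * 2 ^ (q.1 - p.1) ≤ q.2 + 1 :=
      Nat.le_of_mul_le_mul_right h2 h2p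
    have he : 2 ≤ 2 ^ (q.1 - p.1) := by
      calc (2:ℕ) = 2 ^ 1 := (pow_one 2).symm
      _ ≤ 2 ^ (q.1 - p.1) := Nat.pow_le_pow_right (by norm_num) (by omega)
    nlinarith [h1', h2', he]

lemma mul_le_of_anc {p q : ℕ × ℕ} (h : anc q p) :
    q.2 * 2 ^ p.1 ≤ p.2 * 2 ^ q.1 ∧ (p.2 + 1) * 2 ^ q.1 ≤ (q.2 + 1) * 2 ^ p.1 := by
  obtain ⟨hle, hdiv⟩ := h
  set d := p.1 - q.1 with hd
  have hpow : (2:ℕ) ^ p.1 = 2 ^ d * 2 ^ q.1 := by rw [← pow_add]; congr 1; omega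
  have h2d : 0 < 2 ^ d := Nat.pow_pos (by norm_num)
  have h1 : q.2 * 2 ^ d ≤ p.2 := by
    rw [← hdiv]; exact Nat.div_mul_le_self _ _
  have h2 : p.2 < (q.2 + 1) * 2 ^ d := by
    rw [← hdiv]
    have := Nat.div_add_mod p.2 (2 ^ d)
    have hm := Nat.mod_lt p.2 h2d
    nlinarith [Nat.div_mul_le_self p.2 (2 ^ d)]
  constructor
  · rw [hpow, ← mul_assoc]; exact Nat.mul_le_mul_right _ h1
  · rw [hpow, ← mul_assoc]; exact Nat.mul_le_mul_right _ (by omega)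


/-! ### Real interval endpoints -/

/-- Left endpoint of the `θ`-interval of `dyadicArc ξ t p`. -/
def lo (t : ℝ) (p : ℕ × ℕ) : ℝ := -(Real.pi * t) + 2 * Real.pi * t * p.2 / 2 ^ p.1

/-- Right endpoint. -/
def hi (t : ℝ) (p : ℕ × ℕ) : ℝ := -(Real.pi * t) + 2 * Real.pi * t * (p.2 + 1) / 2 ^ p.1

lemma pt_le_iff {t x y : ℝ} {n m : ℕ} (ht : 0 < t) :
    -(Real.pi * t) + 2 * Real.pi * t * x / 2 ^ n ≤
      -(Real.pi * t) + 2 * Real.pi * t * y / 2 ^ m ↔ x * 2 ^ m ≤ y * 2 ^ n := by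
  have hπ : (0:ℝ) < 2 * Real.pi * t := by positivity
  rw [add_le_add_iff_left, div_le_div_iff₀ (by positivity) (by positivity)]
  constructor
  · intro h
    by_contra hcon
    push_neg at hcon
    have := mul_lt_mul_of_pos_left hcon hπ
    nlinarith
  · intro h
    have := mul_le_mul_of_nonneg_left h hπ.le
    nlinarith

lemma pt_lt_iff {t x y : ℝ} {n m : ℕ} (ht : 0 < t) :
    -(Real.pi * t) + 2 * Real.pi * t * x / 2 ^ n <
      -(Real.pi * t) + 2 * Real.pi * t * y / 2 ^ m ↔ x * 2 ^ m < y * 2 ^ n := by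
  have hπ : (0:ℝ) < 2 * Real.pi * t := by positivity
  rw [add_lt_add_iff_left, div_lt_div_iff₀ (by positivity) (by positivity)]
  constructor
  · intro h
    by_contra hcon
    push_neg at hcon
    have := mul_le_mul_of_nonneg_left hcon hπ.le
    nlinarith
  · intro h
    have := mul_lt_mul_of_pos_left h hπ
    nlinarith

lemma lo_le_lo {t : ℝ} (ht : 0 < t) {p q : ℕ × ℕ}
    (h : q.2 * 2 ^ p.1 ≤ p.2 * 2 ^ q.1) : lo t q ≤ lo t p := by
  unfold lo
  rw [pt_le_iff ht]
  exact_mod_cast h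

lemma hi_le_hi {t : ℝ} (ht : 0 < t) {p q : ℕ × ℕ}
    (h : (p.2 + 1) * 2 ^ q.1 ≤ (q.2 + 1) * 2 ^ p.1) : hi t p ≤ hi t q := by
  unfold hi
  rw [pt_le_iff ht]
  exact_mod_cast h

lemma lo_lt_hi {t : ℝ} (ht : 0 < t) (p : ℕ × ℕ) : lo t p < hi t p := by
  unfold lo hi
  rw [pt_lt_iff ht]
  have : (0:ℝ) < 2 ^ p.1 := by positivity
  nlinarith

lemma lo_ge {t : ℝ} (ht : 0 < t) (p : ℕ × ℕ) : -(Real.pi * t) ≤ lo t p := by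
  unfold lo
  have : (0:ℝ) ≤ 2 * Real.pi * t * p.2 / 2 ^ p.1 := by positivity
  linarith

lemma hi_le {t : ℝ} (ht : 0 < t) {p : ℕ × ℕ} (hp : p.2 < 2 ^ p.1) :
    hi t p ≤ Real.pi * t := by
  unfold hi
  have hπ : (0:ℝ) < 2 * Real.pi * t := by positivity
  have h1 : ((p.2 : ℝ) + 1) ≤ 2 ^ p.1 := by exact_mod_cast Nat.succ_le_of_lt hp
  have h2 : (0:ℝ) < 2 ^ p.1 := by positivity
  have : 2 * Real.pi * t * (p.2 + 1) / 2 ^ p.1 ≤ 2 * Real.pi * t := by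
    rw [div_le_iff₀ h2]
    nlinarith
  linarith

/-- Membership in a dyadic arc, phrased with `lo`/`hi`. -/
lemma mem_dyadicArc {ξ : ℂ} {t : ℝ} {p : ℕ × ℕ} {z : ℂ} :
    z ∈ dyadicArc ξ t p ↔
      ∃ θ : ℝ, lo t p ≤ θ ∧ θ < hi t p ∧ z = Complex.exp (θ * Complex.I) * ξ :=
  Iff.rfl

lemma exp_theta_inj {θ θ' : ℝ} (h : Complex.exp (θ * Complex.I) = Complex.exp (θ' * Complex.I))
    (hd : |θ - θ'| < 2 * Real.pi) : θ = θ' := by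
  rw [Complex.exp_eq_exp_iff_exists_int] at h
  obtain ⟨n, hn⟩ := h
  have him := congrArg Complex.im hn
  simp [Complex.add_im, Complex.mul_im] at him
  -- him : θ = θ' + n * (2 * π)  (in some simp normal form)
  have hn0 : n = 0 := by
    by_contra h0
    have h1 : (1:ℝ) ≤ |(n:ℝ)| := by
      have : (1:ℤ) ≤ |n| := Int.one_le_abs (by omega)
      calc (1:ℝ) = ((1:ℤ):ℝ) := by norm_num
      _ ≤ ((|n|:ℤ):ℝ) := by exact_mod_cast this
      _ = |(n:ℝ)| := by push_cast; rfl
    have habs : |θ - θ'| = |(n:ℝ)| * (2 * Real.pi) := by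
      rw [him]
      rw [show θ' + n * (2 * Real.pi) - θ' = (n:ℝ) * (2 * Real.pi) by ring]
      rw [abs_mul, abs_of_pos (by positivity : (0:ℝ) < 2 * Real.pi)]
    rw [habs] at hd
    nlinarith [Real.pi_pos]
  rw [hn0] at him
  simpa using him

/-- Forward: arc inclusion into interval inclusion and then ancestry. -/
lemma anc_of_arc_subset {ξ : ℂ} (hξ : ‖ξ‖ = 1) {t : ℝ} (ht0 : 0 < t) (ht1 : t ≤ 1)
    {p q : ℕ × ℕ} (hp : p.2 < 2 ^ p.1) (hq : q.2 < 2 ^ q.1)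
    (h : dyadicArc ξ t p ⊆ dyadicArc ξ t q) : anc q p := by
  have hξ0 : ξ ≠ 0 := by
    intro h0; rw [h0] at hξ; simp at hξ
  have hJ : ∀ θ : ℝ, lo t p ≤ θ → θ < hi t p → lo t q ≤ θ ∧ θ < hi t q := by
    intro θ h1 h2
    have hz : Complex.exp (θ * Complex.I) * ξ ∈ dyadicArc ξ t q :=
      h ⟨θ, h1, h2, rfl⟩
    obtain ⟨θ', h1', h2', h3'⟩ := hz
    have hee : Complex.exp (θ' * Complex.I) = Complex.exp (θ * Complex.I) :=
      mul_right_cancel₀ hξ0 h3'.symm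
    have hbθ : -(Real.pi * t) ≤ θ ∧ θ < Real.pi * t :=
      ⟨le_trans (lo_ge ht0 p) h1, lt_of_lt_of_le h2 (hi_le ht0 hp)⟩
    have hbθ' : -(Real.pi * t) ≤ θ' ∧ θ' < Real.pi * t :=
      ⟨le_trans (lo_ge ht0 q) h1', lt_of_lt_of_le h2' (hi_le ht0 hq)⟩
    have hππ : Real.pi * t ≤ Real.pi := by nlinarith [Real.pi_pos]
    have heq : θ' = θ := exp_theta_inj hee (by
      rw [abs_sub_lt_iff]
      constructor <;> nlinarith [Real.pi_pos])
    rw [← heq]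
    exact ⟨h1', h2'⟩
  have hlo : lo t q ≤ lo t p := (hJ (lo t p) le_rfl (lo_lt_hi ht0 p)).1
  have hhi : hi t p ≤ hi t q := by
    by_contra hcon
    push_neg at hcon
    have hθ : lo t p ≤ max (lo t p) (hi t q) := le_max_left _ _
    have hθ2 : max (lo t p) (hi t q) < hi t p :=
      max_lt (lo_lt_hi ht0 p) hcon
    have := (hJ _ hθ hθ2).2
    exact absurd this (not_lt.mpr (le_max_right _ _))
  refine anc_of_mul_le ?_ ?_
  · have := (pt_le_iff (x := (q.2:ℝ)) (y := (p.2:ℝ)) ht0).mp hlo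
    exact_mod_cast this
  · have := (pt_le_iff (x := ((p.2:ℝ) + 1)) (y := ((q.2:ℝ) + 1)) ht0).mp hhi
    exact_mod_cast this

/-- Backward: ancestry gives arc inclusion. -/
lemma arc_subset_of_anc {ξ : ℂ} {t : ℝ} (ht0 : 0 < t) {p q : ℕ × ℕ}
    (h : anc q p) : dyadicArc ξ t p ⊆ dyadicArc ξ t q := by
  obtain ⟨h1, h2⟩ := mul_le_of_anc h
  intro z hz
  obtain ⟨θ, hθ1, hθ2, hθ3⟩ := hz
  exact ⟨θ, le_trans (lo_le_lo ht0 h1) hθ1, lt_of_lt_of_le hθ2 (hi_le_hi ht0 h2), hθ3⟩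

/-- Two dyadic θ-intervals that intersect are nested. -/
lemma anc_of_mem_inter {t : ℝ} (ht0 : 0 < t) {p q : ℕ × ℕ} (hle : q.1 ≤ p.1)
    {θ : ℝ} (hp1 : lo t p ≤ θ) (hp2 : θ < hi t p)
    (hq1 : lo t q ≤ θ) (hq2 : θ < hi t q) : anc q p := by
  have h1 : lo t q < hi t p := lt_of_le_of_lt hq1 hp2
  have h2 : lo t p < hi t q := lt_of_le_of_lt hp1 hq2
  have h1' : q.2 * 2 ^ p.1 < (p.2 + 1) * 2 ^ q.1 := by
    have := (pt_lt_iff (x := (q.2:ℝ)) (y := ((p.2:ℝ) + 1)) ht0).mp h1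
    exact_mod_cast this
  have h2' : p.2 * 2 ^ q.1 < (q.2 + 1) * 2 ^ p.1 := by
    have := (pt_lt_iff (x := (p.2:ℝ)) (y := ((q.2:ℝ) + 1)) ht0).mp h2
    exact_mod_cast this
  refine ⟨hle, ?_⟩
  have hpow : (2:ℕ) ^ p.1 = 2 ^ (p.1 - q.1) * 2 ^ q.1 := by
    rw [← pow_add]; congr 1; omega
  have h2q : 0 < 2 ^ q.1 := Nat.pow_pos (by norm_num)
  rw [hpow, ← mul_assoc] at h1' h2'
  have ha : q.2 * 2 ^ (p.1 - q.1) < p.2 + 1 := by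
    by_contra hcon
    push_neg at hcon
    exact absurd h1' (not_lt.mpr (Nat.mul_le_mul_right _ hcon))
  have hb : p.2 < (q.2 + 1) * 2 ^ (p.1 - q.1) := by
    by_contra hcon
    push_neg at hcon
    exact absurd h2' (not_lt.mpr (Nat.mul_le_mul_right _ hcon))
  exact Nat.div_eq_of_lt_le (by omega) hb


/-! ### ENNReal set sums -/

/-- ENNReal sum of dyadic lengths over a set of indices. -/
def Sf (t : ℝ) (A : Set (ℕ × ℕ)) : ℝ≥0∞ :=
  ∑' p : A, ENNReal.ofReal (t / 2 ^ (p : ℕ × ℕ).1)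

lemma Sf_mono {t : ℝ} {A B : Set (ℕ × ℕ)} (h : A ⊆ B) : Sf t A ≤ Sf t B := by
  unfold Sf
  rw [tsum_subtype A (fun p => ENNReal.ofReal (t / 2 ^ p.1)),
      tsum_subtype B (fun p => ENNReal.ofReal (t / 2 ^ p.1))]
  exact ENNReal.tsum_le_tsum fun p =>
    Set.indicator_le_indicator_of_subset h (fun _ => zero_le) p

lemma Sf_union {t : ℝ} {A B : Set (ℕ × ℕ)} (h : Disjoint A B) :
    Sf t (A ∪ B) = Sf t A + Sf t B := by
  unfold Sf
  exact ENNReal.summable.tsum_union_disjoint (f := fun p : ℕ × ℕ => ENNReal.ofReal (t / 2 ^ p.1)) h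
    ENNReal.summable

lemma Sf_eq_ofReal {t : ℝ} {A : Set (ℕ × ℕ)} (ht : 0 ≤ t)
    (hsm : Summable (fun p : A => t / 2 ^ (p : ℕ × ℕ).1)) :
    Sf t A = ENNReal.ofReal (∑' p : A, t / 2 ^ (p : ℕ × ℕ).1) :=
  (ENNReal.ofReal_tsum_of_nonneg (fun p => by positivity) hsm).symm

lemma summable_of_Sf_ne_top {t : ℝ} {A : Set (ℕ × ℕ)} (ht : 0 ≤ t)
    (h : Sf t A ≠ ⊤) : Summable (fun p : A => t / 2 ^ (p : ℕ × ℕ).1) := by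
  have hnn : ∀ p : A, (0:ℝ) ≤ t / 2 ^ (p : ℕ × ℕ).1 := fun p => by positivity
  set g : A → ℝ≥0 := fun p => ⟨t / 2 ^ (p : ℕ × ℕ).1, hnn p⟩ with hg
  have hcoe : ∀ p : A, ENNReal.ofReal (t / 2 ^ (p : ℕ × ℕ).1) = ((g p : ℝ≥0) : ℝ≥0∞) :=
    fun p => ENNReal.ofReal_eq_coe_nnreal _
  have hne' : (∑' p : A, ((g p : ℝ≥0) : ℝ≥0∞)) ≠ ⊤ := by
    rw [← tsum_congr hcoe]; exact h
  exact NNReal.summable_coe.mpr (ENNReal.tsum_coe_ne_top_iff_summable.mp hne')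

lemma Sf_le_tsum_of_cover {t : ℝ} {A : Set (ℕ × ℕ)} {R : Set (ℕ × ℕ)}
    {s : ℕ × ℕ → Set (ℕ × ℕ)} (h : ∀ x ∈ A, ∃ r ∈ R, x ∈ s r) :
    Sf t A ≤ ∑' r : R, Sf t (s r) := by
  unfold Sf
  rw [tsum_subtype A (fun p => ENNReal.ofReal (t / 2 ^ p.1))]
  have hpt : ∀ x : ℕ × ℕ,
      A.indicator (fun p => ENNReal.ofReal (t / 2 ^ p.1)) x ≤
        ∑' r : R, (s ↑r).indicator (fun p => ENNReal.ofReal (t / 2 ^ p.1)) x := by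
    intro x
    by_cases hx : x ∈ A
    · obtain ⟨r, hrR, hrs⟩ := h x hx
      rw [Set.indicator_of_mem hx]
      calc ENNReal.ofReal (t / 2 ^ x.1)
          = (s ↑(⟨r, hrR⟩ : R)).indicator (fun p => ENNReal.ofReal (t / 2 ^ p.1)) x := by
            rw [Set.indicator_of_mem hrs]
        _ ≤ _ := ENNReal.le_tsum (⟨r, hrR⟩ : R)
    · rw [Set.indicator_of_notMem hx]; exact zero_le
  calc (∑' x, A.indicator (fun p => ENNReal.ofReal (t / 2 ^ p.1)) x)
      ≤ ∑' x, ∑' r : R, (s ↑r).indicator (fun p => ENNReal.ofReal (t / 2 ^ p.1)) x :=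
        ENNReal.tsum_le_tsum hpt
    _ = ∑' r : R, ∑' x, (s ↑r).indicator (fun p => ENNReal.ofReal (t / 2 ^ p.1)) x :=
        ENNReal.tsum_comm
    _ = ∑' r : R, ∑' p : s (↑r : ℕ × ℕ), ENNReal.ofReal (t / 2 ^ (p : ℕ × ℕ).1) := by
        exact tsum_congr fun r => (tsum_subtype _ _).symm

end S17

/-- Lemma (Fernández–Nicolau): selecting a subcollection of disjoint dyadic
subarcs with large total length and local density. -/
theorem statement17 (ξ : ℂ) (hξ : ‖ξ‖ = 1) (t : ℝ) (ht : t ∈ Ioc (0 : ℝ) 1)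
    (η c : ℝ) (hη : 0 < η) (hηc : η < c) (hc : c < 1)
    (G : Set (ℕ × ℕ)) (hvalid : ∀ p ∈ G, p.2 < 2 ^ p.1)
    (hdisj : ∀ p ∈ G, ∀ q ∈ G, p ≠ q → Disjoint (dyadicArc ξ t p) (dyadicArc ξ t q))
    (hsum : c * t ≤ ∑' p : G, t / 2 ^ (p : ℕ × ℕ).1) :
    ∃ G₁ ⊆ G, (η * t ≤ ∑' p : G₁, t / 2 ^ (p : ℕ × ℕ).1) ∧
      ∀ q : ℕ × ℕ, q.2 < 2 ^ q.1 →
        (∃ p ∈ G₁, dyadicArc ξ t p ⊆ dyadicArc ξ t q) →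
        (c - η) * (t / 2 ^ q.1) ≤
          ∑' p : {p : ℕ × ℕ // p ∈ G ∧ dyadicArc ξ t p ⊆ dyadicArc ξ t q},
            t / 2 ^ (p : ℕ × ℕ).1 := by
  classical
  obtain ⟨ht0, ht1⟩ := ht
  have hc0 : 0 < c := lt_trans hη hηc
  have hnn : ∀ p : ℕ × ℕ, (0:ℝ) ≤ t / 2 ^ p.1 := fun p => by positivity
  -- summability over G
  have hGsum : Summable (fun p : G => t / 2 ^ (p : ℕ × ℕ).1) := by
    by_contra hcon
    rw [tsum_eq_zero_of_not_summable hcon] at hsum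
    nlinarith
  set Bad : Set (ℕ × ℕ) := {q | q.2 < 2 ^ q.1 ∧
    (∑' p : {p : ℕ × ℕ // p ∈ G ∧ dyadicArc ξ t p ⊆ dyadicArc ξ t q},
        t / 2 ^ (p : ℕ × ℕ).1) < (c - η) * (t / 2 ^ q.1)} with hBadDef
  set G₁ : Set (ℕ × ℕ) := {p | p ∈ G ∧ ∀ q : ℕ × ℕ, q.2 < 2 ^ q.1 →
    dyadicArc ξ t p ⊆ dyadicArc ξ t q → q ∉ Bad} with hG₁Def
  have hG₁G : G₁ ⊆ G := fun p hp => hp.1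
  refine ⟨G₁, hG₁G, ?_, ?_⟩
  swap
  · -- part (ii)
    rintro q hqv ⟨p, hpG₁, hsub⟩
    have hnb : q ∉ Bad := hpG₁.2 q hqv hsub
    exact le_of_not_gt fun hlt => hnb ⟨hqv, hlt⟩
  -- part (i)
  have hofG : S17.Sf t G = ENNReal.ofReal (∑' p : G, t / 2 ^ (p : ℕ × ℕ).1) :=
    S17.Sf_eq_ofReal ht0.le hGsum
  have hSfG_ne : S17.Sf t G ≠ ⊤ := by rw [hofG]; exact ENNReal.ofReal_ne_top
  have hbridge : ∀ A : Set (ℕ × ℕ), A ⊆ G →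
      Summable (fun p : A => t / 2 ^ (p : ℕ × ℕ).1) ∧
      S17.Sf t A = ENNReal.ofReal (∑' p : A, t / 2 ^ (p : ℕ × ℕ).1) := by
    intro A hA
    have hne : S17.Sf t A ≠ ⊤ :=
      fun h => hSfG_ne (eq_top_iff.mpr (h ▸ S17.Sf_mono hA))
    have hsm := S17.summable_of_Sf_ne_top ht0.le hne
    exact ⟨hsm, S17.Sf_eq_ofReal ht0.le hsm⟩
  -- minimal bad ancestors
  set R : Set (ℕ × ℕ) := {r | r ∈ Bad ∧ (∃ p ∈ G \ G₁, S17.anc r p) ∧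
    ∀ r' ∈ Bad, S17.anc r' r → r' = r} with hRDef
  have hcover : ∀ p ∈ G \ G₁, ∃ r ∈ R, S17.anc r p := by
    intro p hp
    have hpG : p ∈ G := hp.1
    have hpn : p ∉ G₁ := hp.2
    have hex : ∃ g : ℕ, ∃ r : ℕ × ℕ, r.1 = g ∧ r ∈ Bad ∧ S17.anc r p := by
      by_contra hcon
      push_neg at hcon
      apply hpn
      refine ⟨hpG, fun q hqv hsub hqB => ?_⟩
      exact hcon q.1 q rfl hqB
        (S17.anc_of_arc_subset hξ ht0 ht1 (hvalid p hpG) hqv hsub)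
    obtain ⟨r₀, hr₀g, hr₀B, hr₀A⟩ := Nat.find_spec hex
    refine ⟨r₀, ⟨hr₀B, ⟨p, hp, hr₀A⟩, ?_⟩, hr₀A⟩
    intro r' hB' hA'
    have h1 : Nat.find hex ≤ r'.1 :=
      Nat.find_min' hex ⟨r', rfl, hB', S17.anc_trans hA' hr₀A⟩
    have h2 : r₀.1 ≤ r'.1 := by rw [hr₀g]; exact h1
    exact S17.anc_eq_of_ge hA' h2
  have hRnest : ∀ r ∈ R, ∀ r' ∈ R, r ≠ r' → ¬ S17.anc r r' := by
    intro r hr r' hr' hne hA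
    exact hne (hr'.2.2 r hr.1 hA)
  -- total length of the minimal bad arcs is at most t
  have hRsum : (∑' r : R, ENNReal.ofReal (t / 2 ^ (r : ℕ × ℕ).1)) ≤ ENNReal.ofReal t := by
    have h2π : (0:ℝ) < 2 * Real.pi := by positivity
    rw [← ENNReal.mul_le_mul_iff_left (c := ENNReal.ofReal (2 * Real.pi))
      (ENNReal.ofReal_pos.mpr h2π).ne' ENNReal.ofReal_ne_top, ← ENNReal.tsum_mul_right]
    have hterm : ∀ r : R, ENNReal.ofReal (t / 2 ^ (r : ℕ × ℕ).1) * ENNReal.ofReal (2 * Real.pi)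
        = volume (Ico (S17.lo t ↑r) (S17.hi t ↑r)) := by
      intro r
      rw [Real.volume_Ico, ← ENNReal.ofReal_mul (hnn _)]
      congr 1
      unfold S17.lo S17.hi
      ring
    have hpair : Pairwise (Function.onFun Disjoint fun r : R => Ico (S17.lo t ↑r) (S17.hi t ↑r)) := by
      intro r r' hne
      have hvne : (r : ℕ × ℕ) ≠ (r' : ℕ × ℕ) := fun h => hne (Subtype.ext h)
      simp only [Function.onFun]
      rw [Set.disjoint_left]
      intro θ hθ hθ'
      rcases le_total (r : ℕ × ℕ).1 (r' : ℕ × ℕ).1 with hle | hle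
      · exact hRnest _ r.2 _ r'.2 hvne
          (S17.anc_of_mem_inter ht0 hle hθ'.1 hθ'.2 hθ.1 hθ.2)
      · exact hRnest _ r'.2 _ r.2 hvne.symm
          (S17.anc_of_mem_inter ht0 hle hθ.1 hθ.2 hθ'.1 hθ'.2)
    calc ∑' r : R, ENNReal.ofReal (t / 2 ^ (r : ℕ × ℕ).1) * ENNReal.ofReal (2 * Real.pi)
        = ∑' r : R, volume (Ico (S17.lo t ↑r) (S17.hi t ↑r)) := tsum_congr hterm
      _ = volume (⋃ r : R, Ico (S17.lo t ↑r) (S17.hi t ↑r)) :=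
          (measure_iUnion hpair fun r => measurableSet_Ico).symm
      _ ≤ volume (Ico (-(Real.pi * t)) (Real.pi * t)) := by
          refine measure_mono (Set.iUnion_subset fun r => ?_)
          intro θ hθ
          refine ⟨le_trans (S17.lo_ge ht0 _) hθ.1, lt_of_lt_of_le hθ.2 ?_⟩
          exact S17.hi_le ht0 (r.2.1.1)
      _ = ENNReal.ofReal t * ENNReal.ofReal (2 * Real.pi) := by
          rw [Real.volume_Ico, ← ENNReal.ofReal_mul ht0.le]
          congr 1
          ring
  -- sum over each bad arc is small
  have hbadle : ∀ r : ℕ × ℕ, r ∈ Bad →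
      S17.Sf t {p | p ∈ G ∧ S17.anc r p} ≤ ENNReal.ofReal ((c - η) * (t / 2 ^ r.1)) := by
    intro r hrB
    have hseteq : {p : ℕ × ℕ | p ∈ G ∧ S17.anc r p}
        = {p : ℕ × ℕ | p ∈ G ∧ dyadicArc ξ t p ⊆ dyadicArc ξ t r} := by
      ext p
      simp only [mem_setOf_eq, and_congr_right_iff]
      intro hpG
      exact ⟨fun h => S17.arc_subset_of_anc ht0 h,
        fun h => S17.anc_of_arc_subset hξ ht0 ht1 (hvalid p hpG) hrB.1 h⟩
    have hsub : {p : ℕ × ℕ | p ∈ G ∧ dyadicArc ξ t p ⊆ dyadicArc ξ t r} ⊆ G :=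
      fun p hp => hp.1
    obtain ⟨hsm, heq⟩ := hbridge _ hsub
    rw [hseteq, heq]
    exact ENNReal.ofReal_le_ofReal (le_of_lt hrB.2)
  -- total removed mass
  have htot : S17.Sf t (G \ G₁) ≤ ENNReal.ofReal ((c - η) * t) := by
    calc S17.Sf t (G \ G₁)
        ≤ ∑' r : R, S17.Sf t {p | p ∈ G ∧ S17.anc ↑r p} := by
          refine S17.Sf_le_tsum_of_cover (s := fun r => {p | p ∈ G ∧ S17.anc r p}) ?_
          intro x hx
          obtain ⟨r, hrR, hrA⟩ := hcover x hx
          exact ⟨r, hrR, hx.1, hrA⟩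
      _ ≤ ∑' r : R, ENNReal.ofReal ((c - η) * (t / 2 ^ (r : ℕ × ℕ).1)) :=
          ENNReal.tsum_le_tsum fun r => hbadle _ r.2.1
      _ = ∑' r : R, ENNReal.ofReal (c - η) * ENNReal.ofReal (t / 2 ^ (r : ℕ × ℕ).1) :=
          tsum_congr fun r => ENNReal.ofReal_mul (by linarith)
      _ = ENNReal.ofReal (c - η) * ∑' r : R, ENNReal.ofReal (t / 2 ^ (r : ℕ × ℕ).1) :=
          ENNReal.tsum_mul_left
      _ ≤ ENNReal.ofReal (c - η) * ENNReal.ofReal t := mul_le_mul_right hRsum _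
      _ = ENNReal.ofReal ((c - η) * t) := (ENNReal.ofReal_mul (by linarith)).symm
  have hsplit : S17.Sf t G = S17.Sf t G₁ + S17.Sf t (G \ G₁) := by
    rw [← S17.Sf_union disjoint_sdiff_right, Set.union_diff_cancel hG₁G]
  have hct : ENNReal.ofReal (c * t) ≤ S17.Sf t G₁ + ENNReal.ofReal ((c - η) * t) := by
    calc ENNReal.ofReal (c * t) ≤ S17.Sf t G := by
          rw [hofG]; exact ENNReal.ofReal_le_ofReal hsum
      _ = S17.Sf t G₁ + S17.Sf t (G \ G₁) := hsplit
      _ ≤ S17.Sf t G₁ + ENNReal.ofReal ((c - η) * t) := add_le_add_right htot _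
  have hfin : ENNReal.ofReal (η * t) ≤ S17.Sf t G₁ := by
    have h1 : ENNReal.ofReal (c * t) - ENNReal.ofReal ((c - η) * t) ≤ S17.Sf t G₁ :=
      tsub_le_iff_right.mpr hct
    calc ENNReal.ofReal (η * t) = ENNReal.ofReal (c * t - (c - η) * t) := by
          congr 1; ring
      _ = ENNReal.ofReal (c * t) - ENNReal.ofReal ((c - η) * t) :=
          ENNReal.ofReal_sub _ (by nlinarith)
      _ ≤ S17.Sf t G₁ := h1
  obtain ⟨hsmG₁, heqG₁⟩ := hbridge G₁ hG₁G
  rw [heqG₁, ENNReal.ofReal_le_ofReal_iff (tsum_nonneg fun p => hnn _)] at hfin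
  exact hfin


end
end
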